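/- arXiv:1512.08701 — 6 statements merged into one kernel-verified Lean document; each statement's English description precedes it below -/
import Mathlib

section
/- Bárány–Doerr averaging (case d=1, stated for m parts): for every finite set A of real numbers in [0,1] and every positive integer m, there is a partition of A into m parts A_1,...,A_m such that for each i, the sum of elements of A_i lies within distance 3 of (1/m) times the sum of all elements of A. -/
/-- Bárány–Doerr averaging, case `d = 1`: a finite set `A ⊆ [0,1]` can be partitioned
into `m` parts, each of whose sums is within `3` of `(1/m) ∑_{a ∈ A} a`. -/
theorem barany_doerr_dim_one (A : Finset ℝ) (hA : ∀ a ∈ A, a ∈ Set.Icc (0 : ℝ) 1)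
    (m : ℕ) (hm : 0 < m) :
    ∃ P : Fin m → Finset ℝ,
      (∀ i j, i ≠ j → Disjoint (P i) (P j)) ∧
      Finset.univ.biUnion P = A ∧
      ∀ i, |(∑ a ∈ P i, a) - (1 / m) * ∑ a ∈ A, a| ≤ 3 := by
  have hnonneg : ∀ a ∈ A, (0:ℝ) ≤ a := fun a ha => (hA a ha).1
  have hle1 : ∀ a ∈ A, a ≤ (1:ℝ) := fun a ha => (hA a ha).2
  set s : ℝ := ∑ a ∈ A, a with hs
  have hs0 : 0 ≤ s := Finset.sum_nonneg hnonneg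
  rcases eq_or_lt_of_le hs0 with hzero | hpos
  · -- degenerate case: all sums are zero
    refine ⟨fun i => if i = ⟨0, hm⟩ then A else ∅, ?_, ?_, ?_⟩
    · intro i j hij
      by_cases hi : i = ⟨0, hm⟩ <;> by_cases hj : j = ⟨0, hm⟩ <;>
        simp_all [Finset.disjoint_empty_left, Finset.disjoint_empty_right]
    · ext a
      simp only [Finset.mem_biUnion, Finset.mem_univ, true_and]
      constructor
      · rintro ⟨i, hi⟩
        split at hi
        · exact hi
        · simp at hi
      · intro ha
        exact ⟨⟨0, hm⟩, by simp [ha]⟩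
    · intro i
      have hsz : s = 0 := hzero.symm
      by_cases hi : i = ⟨0, hm⟩ <;> simp [hi, ← hs, hsz]
  · -- main case: s > 0
    set μ : ℝ := s / m with hμ
    have hm' : (0:ℝ) < m := by exact_mod_cast hm
    have hμpos : 0 < μ := div_pos hpos hm'
    have hsm : (m:ℝ) * μ = s := by rw [hμ]; field_simp [hm'.ne']
    set pref : ℝ → ℝ := fun a => ∑ b ∈ A.filter (fun b => b < a), b with hpref
    have hpref_nonneg : ∀ a, 0 ≤ pref a := by
      intro a
      exact Finset.sum_nonneg fun b hb => hnonneg b (Finset.mem_filter.mp hb).1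
    have hmono : ∀ a b, a ≤ b → pref a ≤ pref b := by
      intro a b hab
      refine Finset.sum_le_sum_of_subset_of_nonneg ?_ ?_
      · intro c hc
        rw [Finset.mem_filter] at hc ⊢
        exact ⟨hc.1, lt_of_lt_of_le hc.2 hab⟩
      · intro c hc _
        exact hnonneg c (Finset.mem_filter.mp hc).1
    set f : ℝ → ℕ := fun a => min (⌊pref a / μ⌋₊) (m-1) with hf
    have hflt : ∀ a, f a < m := by
      intro a
      simp only [hf, min_le_iff]
      omega
    have hiff : ∀ (a : ℝ) (k : ℕ), k + 1 < m → (f a ≤ k ↔ pref a < ((k:ℝ)+1) * μ) := by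
      intro a k hk
      have h1 : f a ≤ k ↔ ⌊pref a / μ⌋₊ ≤ k := by
        simp only [hf, min_le_iff]
        omega
      rw [h1]
      have h2 : ⌊pref a / μ⌋₊ ≤ k ↔ pref a / μ < (k:ℝ) + 1 := by
        rw [← Nat.lt_succ_iff, Nat.floor_lt (div_nonneg (hpref_nonneg a) hμpos.le)]
        push_cast
        rfl
      rw [h2, div_lt_iff₀ hμpos]
    set T : ℕ → ℝ := fun k => ∑ a ∈ A.filter (fun a => f a ≤ k), a with hT
    have hTtop : T (m-1) = s := by
      simp only [hT]
      rw [Finset.filter_true_of_mem fun a _ => min_le_right _ _]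
    have hTbound : ∀ k, k < m → ((k:ℝ)+1) * μ ≤ T k ∧ T k ≤ ((k:ℝ)+1)*μ + 1 := by
      intro k hk
      by_cases hke : k = m - 1
      · subst hke
        have hc : ((m-1:ℕ):ℝ) + 1 = (m:ℝ) := by
          have : ((m-1:ℕ):ℝ) = (m:ℝ) - 1 := by
            push_cast [Nat.cast_sub hm]
            ring
          linarith
        rw [hTtop, hc, hsm]
        constructor <;> linarith
      · have hk1 : k + 1 < m := by omega
        set t : ℝ := ((k:ℝ)+1) * μ with ht
        have htpos : 0 < t := by positivity
        have hts : t ≤ s := by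
          rw [← hsm]
          have : ((k:ℝ)+1) ≤ (m:ℝ) := by exact_mod_cast hk1.le
          nlinarith
        have hfilt : A.filter (fun a => f a ≤ k) = A.filter (fun a => pref a < t) := by
          apply Finset.filter_congr
          intro a _
          simp only [hiff a k hk1, ht, eq_iff_iff]
        simp only [hT, hfilt]
        set L := A.filter (fun a => pref a < t) with hL
        constructor
        · -- lower bound
          set C := A.filter (fun a => t ≤ pref a) with hC
          rcases C.eq_empty_or_nonempty with hCe | hCne
          · have : L = A := by
              rw [hL, Finset.filter_true_of_mem]
              intro a ha
              by_contra hcon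
              have : a ∈ C := Finset.mem_filter.mpr ⟨ha, not_lt.mp hcon⟩
              simp [hCe] at this
            rw [this]
            exact hts
          · set a0 := C.min' hCne with ha0
            have ha0C : a0 ∈ C := C.min'_mem hCne
            have ha0A : a0 ∈ A := (Finset.mem_filter.mp ha0C).1
            have ha0p : t ≤ pref a0 := (Finset.mem_filter.mp ha0C).2
            have hLeq : L = A.filter (fun b => b < a0) := by
              ext b
              simp only [hL, Finset.mem_filter]
              constructor
              · rintro ⟨hbA, hbp⟩
                refine ⟨hbA, ?_⟩
                by_contra hcon
                have : pref a0 ≤ pref b := hmono a0 b (not_lt.mp hcon)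
                linarith
              · rintro ⟨hbA, hb⟩
                refine ⟨hbA, ?_⟩
                by_contra hcon
                have : b ∈ C := Finset.mem_filter.mpr ⟨hbA, not_lt.mp hcon⟩
                have := C.min'_le b this
                rw [← ha0] at this
                linarith
            rw [hLeq]
            exact le_trans ha0p le_rfl
        · -- upper bound
          rcases L.eq_empty_or_nonempty with hLe | hLne
          · rw [hLe]
            simp
            linarith
          · set c := L.max' hLne with hc
            have hcL : c ∈ L := L.max'_mem hLne
            have hcA : c ∈ A := (Finset.mem_filter.mp hcL).1
            have hcp : pref c < t := (Finset.mem_filter.mp hcL).2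
            have hc1 : c ≤ 1 := hle1 c hcA
            have hsub : ∑ a ∈ L, a ≤ ∑ a ∈ A.filter (fun b => b ≤ c), a := by
              refine Finset.sum_le_sum_of_subset_of_nonneg ?_ ?_
              · intro b hb
                exact Finset.mem_filter.mpr ⟨(Finset.mem_filter.mp hb).1, L.le_max' b hb⟩
              · intro b hb _
                exact hnonneg b (Finset.mem_filter.mp hb).1
            have hins : A.filter (fun b => b ≤ c) = insert c (A.filter (fun b => b < c)) := by
              ext b
              simp only [Finset.mem_filter, Finset.mem_insert]
              constructor
              · rintro ⟨hbA, hb⟩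
                rcases lt_or_eq_of_le hb with h | h
                · exact Or.inr ⟨hbA, h⟩
                · exact Or.inl h
              · rintro (h | ⟨hbA, hb⟩)
                · exact ⟨h ▸ hcA, h ▸ le_rfl⟩
                · exact ⟨hbA, hb.le⟩
            have hnotmem : c ∉ A.filter (fun b => b < c) := by
              simp [Finset.mem_filter]
            have hsum : ∑ a ∈ A.filter (fun b => b ≤ c), a = c + pref c := by
              rw [hins, Finset.sum_insert hnotmem]
            linarith
    have hdec : ∀ k, 0 < k →
        T k = T (k-1) + ∑ a ∈ A.filter (fun a => f a = k), a := by
      intro k hk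
      have hsplit : A.filter (fun a => f a ≤ k)
          = A.filter (fun a => f a ≤ k-1) ∪ A.filter (fun a => f a = k) := by
        ext a
        simp only [Finset.mem_filter, Finset.mem_union]
        by_cases haA : a ∈ A <;> simp [haA] <;> omega
      have hdisj : Disjoint (A.filter (fun a => f a ≤ k-1)) (A.filter (fun a => f a = k)) := by
        rw [Finset.disjoint_left]
        intro a ha hb
        have h1 := (Finset.mem_filter.mp ha).2
        have h2 := (Finset.mem_filter.mp hb).2
        omega
      simp only [hT]
      rw [hsplit, Finset.sum_union hdisj]
    refine ⟨fun i => A.filter (fun a => f a = i.val), ?_, ?_, ?_⟩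
    · intro i j hij
      rw [Finset.disjoint_left]
      intro a ha hb
      have h1 := (Finset.mem_filter.mp ha).2
      have h2 := (Finset.mem_filter.mp hb).2
      exact hij (Fin.ext (h1 ▸ h2 ▸ rfl))
    · ext a
      simp only [Finset.mem_biUnion, Finset.mem_univ, true_and, Finset.mem_filter]
      constructor
      · rintro ⟨i, hi, _⟩
        exact hi
      · intro ha
        exact ⟨⟨f a, hflt a⟩, ha, rfl⟩
    · intro i
      have hms : (1 / (m:ℝ)) * s = μ := by
        rw [hμ]
        ring
      rw [hms]
      set k := i.val with hk
      show |∑ a ∈ A.filter (fun a => f a = k), a - μ| ≤ 3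
      have hkm : k < m := i.isLt
      by_cases hk0 : k = 0
      · have hfilt : A.filter (fun a => f a = k) = A.filter (fun a => f a ≤ 0) := by
          apply Finset.filter_congr
          intro a _
          constructor
          · intro h; omega
          · intro h; omega
        have hb := hTbound 0 hm
        norm_num at hb
        rw [hfilt]
        have : ∑ a ∈ A.filter (fun a => f a ≤ 0), a = T 0 := rfl
        rw [this, abs_le]
        constructor <;> linarith [hb.1, hb.2]
      · have hk1 : 0 < k := Nat.pos_of_ne_zero hk0
        have hd := hdec k hk1
        have hb1 := hTbound k hkm
        have hb2 := hTbound (k-1) (by omega)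
        have hcast : ((k-1:ℕ):ℝ) + 1 = (k:ℝ) := by
          push_cast [Nat.cast_sub hk1]
          ring
        rw [hcast] at hb2
        have hsum : ∑ a ∈ A.filter (fun a => f a = k), a = T k - T (k-1) := by
          linarith
        rw [hsum, abs_le]
        constructor <;> [nlinarith [hb1.1, hb2.2]; nlinarith [hb1.2, hb2.1]]
end

section
/- Let a_1,...,a_t ∈ [0,1]^d and let m be a positive integer. Then there is a partition of {1,...,t} into sets I_1,...,I_m such that for each k and each coordinate j, |∑_{i∈I_k} (a_i)_j − (1/m)∑_{i=1}^t (a_i)_j| ≤ 3d. -/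
open Finset

lemma exists_kernel_vec {d t : ℕ} (a : Fin t → Fin d → ℝ) (F : Finset (Fin t))
    (J : Finset (Fin d)) (h : J.card < F.card) :
    ∃ u : Fin t → ℝ, (∀ i ∉ F, u i = 0) ∧ (∃ i, u i ≠ 0) ∧
      ∀ j ∈ J, ∑ i ∈ F, u i * a i j = 0 := by
  classical
  let φ : (↥F → ℝ) →ₗ[ℝ] (↥J → ℝ) :=
    { toFun := fun u j => ∑ i : ↥F, u i * a i j
      map_add' := by
        intro u v; funext j; simp [add_mul, Finset.sum_add_distrib]
      map_smul' := by
        intro c u; funext j; simp [Finset.mul_sum, mul_assoc] }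
  have hker : ∃ u : ↥F → ℝ, u ≠ 0 ∧ φ u = 0 := by
    by_contra hc
    push_neg at hc
    have hinj : Function.Injective φ := by
      rw [← LinearMap.ker_eq_bot, LinearMap.ker_eq_bot']
      intro u hu
      by_contra hne
      exact (hc u hne) hu
    have := LinearMap.finrank_le_finrank_of_injective hinj
    rw [Module.finrank_fintype_fun_eq_card, Module.finrank_fintype_fun_eq_card] at this
    simp [Fintype.card_coe] at this
    omega
  obtain ⟨u, hu0, huk⟩ := hker
  refine ⟨fun i => if h : i ∈ F then u ⟨i, h⟩ else 0, ?_, ?_, ?_⟩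
  · intro i hi; simp [hi]
  · obtain ⟨⟨i, hi⟩, hne⟩ := Function.ne_iff.mp hu0
    exact ⟨i, by simpa [hi] using hne⟩
  · intro j hj
    have hz : ∑ i : ↥F, u i * a i j = 0 := congrFun huk ⟨j, hj⟩
    have h2 : ∑ i ∈ F, (if h : i ∈ F then u ⟨i, h⟩ else 0) * a i j
        = ∑ i : ↥F, u i * a i j := by
      rw [← Finset.sum_attach F fun i => (if h : i ∈ F then u ⟨i, h⟩ else 0) * a i j]
      exact Finset.sum_congr rfl fun i _ => by simp
    rw [h2, hz]

lemma round_aux (d t : ℕ) (a : Fin t → Fin d → ℝ)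
    (ha : ∀ i j, a i j ∈ Set.Icc (0 : ℝ) 1) (S : Finset (Fin t)) :
    ∀ n (x : Fin t → ℝ), (∀ i, x i ∈ Set.Icc (0 : ℝ) 1) →
      (S.filter fun i => x i ≠ 0 ∧ x i ≠ 1).card ≤ n →
    ∃ A : Finset (Fin t), A ⊆ S ∧ (∀ i ∈ S, x i = 1 → i ∈ A) ∧
      (∀ i ∈ S, x i = 0 → i ∉ A) ∧
      ∀ j, |(∑ i ∈ A, a i j) - ∑ i ∈ S, x i * a i j| ≤
        min (d : ℝ) (∑ i ∈ S.filter (fun i => x i ≠ 0 ∧ x i ≠ 1), a i j) := by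
  classical
  intro n
  induction n with
  | zero =>
    intro x hx hcard
    have hF : (S.filter fun i => x i ≠ 0 ∧ x i ≠ 1) = ∅ := by
      rwa [Nat.le_zero, Finset.card_eq_zero] at hcard
    have hint : ∀ i ∈ S, x i = 0 ∨ x i = 1 := by
      intro i hi
      by_contra hcon
      push_neg at hcon
      have : i ∈ (S.filter fun i => x i ≠ 0 ∧ x i ≠ 1) :=
        Finset.mem_filter.2 ⟨hi, hcon.1, hcon.2⟩
      simp [hF] at this
    refine ⟨S.filter fun i => x i = 1, Finset.filter_subset _ _, ?_, ?_, ?_⟩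
    · intro i hi hxi; exact Finset.mem_filter.2 ⟨hi, hxi⟩
    · intro i hi hxi hmem
      have := (Finset.mem_filter.1 hmem).2
      rw [hxi] at this; norm_num at this
    · intro j
      have heq : ∑ i ∈ S.filter (fun i => x i = 1), a i j = ∑ i ∈ S, x i * a i j := by
        rw [Finset.sum_filter]
        refine Finset.sum_congr rfl fun i hi => ?_
        rcases hint i hi with h0 | h1
        · have : ¬ x i = 1 := by rw [h0]; norm_num
          simp [h0, this]
        · simp [h1]
      rw [heq, hF]
      simp
  | succ n ih =>
    intro x hx hcard
    by_cases hle : (S.filter fun i => x i ≠ 0 ∧ x i ≠ 1).card ≤ n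
    · exact ih x hx hle
    set F := S.filter fun i => x i ≠ 0 ∧ x i ≠ 1 with hFdef
    have hFS : F ⊆ S := Finset.filter_subset _ _
    have hFpos : 0 < F.card := by omega
    have hxF : ∀ i ∈ F, 0 < x i ∧ x i < 1 := by
      intro i hi
      obtain ⟨hiS, h0, h1⟩ := Finset.mem_filter.1 hi
      obtain ⟨ha0, ha1⟩ := hx i
      exact ⟨lt_of_le_of_ne ha0 (Ne.symm h0), lt_of_le_of_ne ha1 h1⟩
    set J := Finset.univ.filter (fun j : Fin d => (d : ℝ) < ∑ i ∈ F, a i j) with hJdef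
    have hJlt : ∀ j ∈ J, (d : ℝ) < ∑ i ∈ F, a i j := by
      intro j hj; exact (Finset.mem_filter.1 hj).2
    have hJF : J.card < F.card := by
      rcases J.eq_empty_or_nonempty with hJe | hJne
      · rw [hJe]; simpa using hFpos
      · have hd0 : 0 < d := by
          obtain ⟨j, _⟩ := hJne
          exact Fin.pos j
        have h1 : (J.card : ℝ) * d < ∑ j ∈ J, ∑ i ∈ F, a i j := by
          have := Finset.sum_lt_sum_of_nonempty hJne hJlt
          simpa [Finset.sum_const, nsmul_eq_mul] using this
        have h2 : ∑ j ∈ J, ∑ i ∈ F, a i j ≤ (F.card : ℝ) * d := by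
          have h3 : ∑ j ∈ J, ∑ i ∈ F, a i j ≤ ∑ j : Fin d, ∑ i ∈ F, a i j := by
            refine Finset.sum_le_sum_of_subset_of_nonneg (Finset.subset_univ _) ?_
            intro j _ _
            exact Finset.sum_nonneg fun i _ => (ha i j).1
          have h4 : ∑ j : Fin d, ∑ i ∈ F, a i j = ∑ i ∈ F, ∑ j : Fin d, a i j :=
            Finset.sum_comm
          have h5 : ∑ i ∈ F, ∑ j : Fin d, a i j ≤ ∑ i ∈ F, (d : ℝ) := by
            refine Finset.sum_le_sum fun i _ => ?_
            calc ∑ j : Fin d, a i j ≤ ∑ j : Fin d, (1 : ℝ) :=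
                Finset.sum_le_sum fun j _ => (ha i j).2
              _ = d := by simp
          calc ∑ j ∈ J, ∑ i ∈ F, a i j ≤ ∑ i ∈ F, ∑ j : Fin d, a i j := by
                rw [← h4]; exact h3
            _ ≤ ∑ i ∈ F, (d : ℝ) := h5
            _ = (F.card : ℝ) * d := by simp [Finset.sum_const, nsmul_eq_mul]
        have : (J.card : ℝ) * d < (F.card : ℝ) * d := lt_of_lt_of_le h1 h2
        have hdr : (0 : ℝ) < d := by exact_mod_cast hd0
        have hlt : (J.card : ℝ) < (F.card : ℝ) := by
          exact lt_of_mul_lt_mul_right this (le_of_lt hdr)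
        exact_mod_cast hlt
    obtain ⟨u, husupp, ⟨i₀, hi₀⟩, huker⟩ := exists_kernel_vec a F J hJF
    set T := F.filter (fun i => u i ≠ 0) with hTdef
    have hTne : T.Nonempty := by
      refine ⟨i₀, Finset.mem_filter.2 ⟨?_, hi₀⟩⟩
      by_contra hcon
      exact hi₀ (husupp i₀ hcon)
    set c : Fin t → ℝ := fun i => if 0 < u i then (1 - x i) / u i else x i / (-u i)
      with hcdef
    set ε := T.inf' hTne c with hεdef
    have hcpos : ∀ i ∈ T, 0 < c i := by
      intro i hi
      obtain ⟨hiF, hiu⟩ := Finset.mem_filter.1 hi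
      obtain ⟨hx0, hx1⟩ := hxF i hiF
      by_cases hupos : 0 < u i
      · simp only [hcdef, if_pos hupos]
        exact div_pos (by linarith) hupos
      · have huneg : u i < 0 := lt_of_le_of_ne (not_lt.1 hupos) hiu
        simp only [hcdef, if_neg hupos]
        exact div_pos hx0 (by linarith)
    have hεpos : 0 < ε := (Finset.lt_inf'_iff _).2 hcpos
    have hεle : ∀ i ∈ T, ε ≤ c i := fun i hi => Finset.inf'_le c hi
    set x' : Fin t → ℝ := fun i => x i + ε * u i with hx'def
    have hTz : ∀ i, i ∉ T → x' i = x i := by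
      intro i hi
      have : u i = 0 := by
        by_cases hiF : i ∈ F
        · by_contra hcon
          exact hi (Finset.mem_filter.2 ⟨hiF, hcon⟩)
        · exact husupp i hiF
      simp [hx'def, this]
    have hx'mem : ∀ i, x' i ∈ Set.Icc (0 : ℝ) 1 := by
      intro i
      by_cases hiT : i ∈ T
      · obtain ⟨hiF, hiu⟩ := Finset.mem_filter.1 hiT
        obtain ⟨hx0, hx1⟩ := hxF i hiF
        have hεc := hεle i hiT
        by_cases hupos : 0 < u i
        · rw [hcdef] at hεc
          simp only [if_pos hupos] at hεc
          have : ε * u i ≤ 1 - x i := by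
            rw [← div_mul_cancel₀ (1 - x i) (ne_of_gt hupos)]
            exact mul_le_mul_of_nonneg_right hεc (le_of_lt hupos)
          constructor
          · simp only [hx'def]; nlinarith
          · simp only [hx'def]; linarith
        · have huneg : u i < 0 := lt_of_le_of_ne (not_lt.1 hupos) hiu
          rw [hcdef] at hεc
          simp only [if_neg hupos] at hεc
          have : ε * (-u i) ≤ x i := by
            rw [← div_mul_cancel₀ (x i) (by linarith : -u i ≠ 0)]
            exact mul_le_mul_of_nonneg_right hεc (by linarith)
          constructor
          · simp only [hx'def]; nlinarith
          · simp only [hx'def]; nlinarith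
      · rw [hTz i hiT]; exact hx i
    obtain ⟨i₁, hi₁T, hεeq⟩ := Finset.exists_mem_eq_inf' hTne c
    have hi₁F : i₁ ∈ F := (Finset.mem_filter.1 hi₁T).1
    have hi₁u : u i₁ ≠ 0 := (Finset.mem_filter.1 hi₁T).2
    have hi₁int : x' i₁ = 0 ∨ x' i₁ = 1 := by
      by_cases hupos : 0 < u i₁
      · right
        simp only [hx'def]
        rw [hεdef, hεeq, hcdef]
        simp only [if_pos hupos]
        field_simp
        ring
      · left
        have huneg : u i₁ < 0 := lt_of_le_of_ne (not_lt.1 hupos) hi₁u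
        simp only [hx'def]
        rw [hεdef, hεeq, hcdef]
        simp only [if_neg hupos]
        rw [div_neg, neg_mul, div_mul_cancel₀ _ hi₁u]
        ring
    have hF'sub : (S.filter fun i => x' i ≠ 0 ∧ x' i ≠ 1) ⊆ F.erase i₁ := by
      intro i hi
      obtain ⟨hiS, hi0, hi1⟩ := Finset.mem_filter.1 hi
      have hiF : i ∈ F := by
        by_contra hcon
        have hxx : x' i = x i := by simp [hx'def, husupp i hcon]
        have : i ∈ F := Finset.mem_filter.2 ⟨hiS, by rwa [hxx] at hi0, by rwa [hxx] at hi1⟩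
        exact hcon this
      refine Finset.mem_erase.2 ⟨?_, hiF⟩
      rintro rfl
      rcases hi₁int with h | h
      · exact hi0 h
      · exact hi1 h
    have hcard' : (S.filter fun i => x' i ≠ 0 ∧ x' i ≠ 1).card ≤ n := by
      have h1 := Finset.card_le_card hF'sub
      have h2 : (F.erase i₁).card = F.card - 1 := Finset.card_erase_of_mem hi₁F
      have h3 : F.card ≤ n + 1 := hcard
      omega
    obtain ⟨A, hAS, hA1', hA0', hAb'⟩ := ih x' hx'mem hcard'
    have hA1 : ∀ i ∈ S, x i = 1 → i ∈ A := by
      intro i hiS hxi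
      have hiF : i ∉ F := by
        intro hcon
        exact (Finset.mem_filter.1 hcon).2.2 hxi
      have : x' i = 1 := by
        have := husupp i hiF
        simp [hx'def, this, hxi]
      exact hA1' i hiS this
    have hA0 : ∀ i ∈ S, x i = 0 → i ∉ A := by
      intro i hiS hxi
      have hiF : i ∉ F := by
        intro hcon
        exact (Finset.mem_filter.1 hcon).2.1 hxi
      have : x' i = 0 := by
        have := husupp i hiF
        simp [hx'def, this, hxi]
      exact hA0' i hiS this
    refine ⟨A, hAS, hA1, hA0, ?_⟩
    intro j
    by_cases hj : (d : ℝ) < ∑ i ∈ F, a i j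
    · -- active coordinate: the kernel move preserved the sum
      have hjJ : j ∈ J := Finset.mem_filter.2 ⟨Finset.mem_univ j, hj⟩
      have hkey : ∑ i ∈ S, x' i * a i j = ∑ i ∈ S, x i * a i j := by
        have h1 : ∑ i ∈ S, x' i * a i j
            = ∑ i ∈ S, x i * a i j + ε * ∑ i ∈ S, u i * a i j := by
          rw [Finset.mul_sum, ← Finset.sum_add_distrib]
          refine Finset.sum_congr rfl fun i _ => ?_
          simp [hx'def]; ring
        have h2 : ∑ i ∈ S, u i * a i j = ∑ i ∈ F, u i * a i j := by
          refine (Finset.sum_subset hFS ?_).symm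
          intro i _ hiF
          simp [husupp i hiF]
        rw [h1, h2, huker j hjJ, mul_zero, add_zero]
      rw [← hkey]
      refine le_trans (hAb' j) ?_
      refine le_trans (min_le_left _ _) ?_
      rw [min_eq_left (le_of_lt hj)]
    · -- inactive coordinate: crude bound by the fractional mass
      push_neg at hj
      rw [min_eq_right hj]
      have hind : ∑ i ∈ A, a i j = ∑ i ∈ S, (if i ∈ A then (1 : ℝ) else 0) * a i j := by
        rw [Finset.sum_congr rfl (fun i (_ : i ∈ S) => by
          rw [ite_mul, one_mul, zero_mul]), Finset.sum_ite_mem,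
          Finset.inter_eq_right.2 hAS]
      rw [hind, ← Finset.sum_sub_distrib]
      have hsplit := Finset.sum_filter_add_sum_filter_not S
        (fun i => x i ≠ 0 ∧ x i ≠ 1)
        (fun i => (if i ∈ A then (1 : ℝ) else 0) * a i j - x i * a i j)
      rw [← hsplit]
      have hzero : ∑ i ∈ S.filter (fun i => ¬(x i ≠ 0 ∧ x i ≠ 1)),
          ((if i ∈ A then (1 : ℝ) else 0) * a i j - x i * a i j) = 0 := by
        refine Finset.sum_eq_zero fun i hi => ?_
        obtain ⟨hiS, hni⟩ := Finset.mem_filter.1 hi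
        have : x i = 0 ∨ x i = 1 := by
          by_contra hcon
          push_neg at hcon
          exact hni ⟨hcon.1, hcon.2⟩
        rcases this with h | h
        · simp [h, hA0 i hiS h]
        · simp [h, hA1 i hiS h]
      rw [hzero, add_zero]
      refine le_trans (Finset.abs_sum_le_sum_abs _ _) ?_
      refine Finset.sum_le_sum fun i hi => ?_
      have hiF : i ∈ F := hi
      have haj := ha i j
      have hxi := hx i
      rw [← sub_mul, abs_mul, abs_of_nonneg haj.1]
      by_cases hiA : i ∈ A
      · simp only [if_pos hiA]
        have : |1 - x i| ≤ 1 := by rw [abs_le]; constructor <;> linarith [hxi.1, hxi.2]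
        nlinarith [haj.1, haj.2]
      · simp only [if_neg hiA]
        have : |0 - x i| ≤ 1 := by rw [abs_le]; constructor <;> linarith [hxi.1, hxi.2]
        nlinarith [haj.1, haj.2]

lemma round_weight (d t : ℕ) (a : Fin t → Fin d → ℝ)
    (ha : ∀ i j, a i j ∈ Set.Icc (0 : ℝ) 1) (S : Finset (Fin t)) (θ : ℝ)
    (hθ : θ ∈ Set.Icc (0 : ℝ) 1) :
    ∃ A : Finset (Fin t), A ⊆ S ∧
      ∀ j, |(∑ i ∈ A, a i j) - θ * ∑ i ∈ S, a i j| ≤ d := by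
  classical
  obtain ⟨A, hAS, -, -, hb⟩ :=
    round_aux d t a ha S (S.filter fun i => (fun _ => θ) i ≠ 0 ∧ (fun _ => θ) i ≠ 1).card
      (fun _ => θ) (fun _ => hθ) le_rfl
  refine ⟨A, hAS, fun j => ?_⟩
  have hb' := hb j
  rw [Finset.mul_sum]
  exact le_trans hb' (min_le_left _ _)

lemma chain_bound (dr cr mr X SA SS : ℝ) (hd : 0 ≤ dr) (hc1 : 1 ≤ cr) (hm : 0 < mr)
    (h3 : 3 * cr ≤ 2 * mr)
    (h1 : |X - (1 / cr) * SA| ≤ (3 - 3 / cr) * dr)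
    (h2 : |SA - (cr / mr) * SS| ≤ dr) :
    |X - (1 / mr) * SS| ≤ (3 - 3 / mr) * dr := by
  have hc0 : (0 : ℝ) < cr := by linarith
  have e : (1 / mr) * SS = (1 / cr) * ((cr / mr) * SS) := by
    field_simp
  calc |X - (1 / mr) * SS|
      ≤ |X - (1 / cr) * SA| + |(1 / cr) * SA - (1 / mr) * SS| := abs_sub_le _ _ _
    _ ≤ (3 - 3 / cr) * dr + (1 / cr) * dr := by
        refine add_le_add h1 ?_
        rw [e, ← mul_sub, abs_mul, abs_of_nonneg (by positivity : (0:ℝ) ≤ 1 / cr)]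
        exact mul_le_mul_of_nonneg_left h2 (by positivity)
    _ ≤ (3 - 3 / mr) * dr := by
        have hdd : 3 / mr ≤ 2 / cr := by
          rw [div_le_div_iff₀ hm hc0]; linarith
        have hcoef : (3 - 3 / cr) + 1 / cr ≤ 3 - 3 / mr := by
          have e1 : (3 : ℝ) / cr = 3 * (1 / cr) := by ring
          have e2 : (2 : ℝ) / cr = 2 * (1 / cr) := by ring
          rw [e1]
          rw [e2] at hdd
          linarith
        calc (3 - 3 / cr) * dr + (1 / cr) * dr = ((3 - 3 / cr) + 1 / cr) * dr := by ring
          _ ≤ (3 - 3 / mr) * dr := mul_le_mul_of_nonneg_right hcoef hd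

lemma part_aux (d t : ℕ) (a : Fin t → Fin d → ℝ)
    (ha : ∀ i j, a i j ∈ Set.Icc (0 : ℝ) 1) :
    ∀ m : ℕ, 0 < m → ∀ S : Finset (Fin t),
    ∃ I : Fin m → Finset (Fin t),
      (∀ k l, k ≠ l → Disjoint (I k) (I l)) ∧
      Finset.univ.biUnion I = S ∧
      ∀ k j, |(∑ i ∈ I k, a i j) - (1 / m) * ∑ i ∈ S, a i j| ≤ (3 - 3 / m) * d := by
  classical
  intro m
  induction m using Nat.strong_induction_on with
  | _ m ih =>
  intro hm S
  by_cases hm1 : m = 1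
  · subst hm1
    refine ⟨fun _ => S, ?_, ?_, ?_⟩
    · intro k l hkl
      exact absurd (Subsingleton.elim k l) hkl
    · ext i; simp
    · intro k j
      norm_num
  · have hm2 : 2 ≤ m := by omega
    set q : ℕ := (m + 1) / 2 with hqdef
    set q' : ℕ := m - q with hq'def
    have hq1 : 1 ≤ q := by omega
    have hqm : q < m := by omega
    have hq'1 : 1 ≤ q' := by omega
    have hq'm : q' < m := by omega
    have hqq' : q + q' = m := by omega
    have h3q : 3 * q ≤ 2 * m := by omega
    have h3q' : 3 * q' ≤ 2 * m := by omega
    have hθ : (q : ℝ) / m ∈ Set.Icc (0 : ℝ) 1 := by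
      constructor
      · positivity
      · rw [div_le_one (by exact_mod_cast hm : (0:ℝ) < m)]
        exact_mod_cast le_of_lt hqm
    obtain ⟨A, hAS, hA⟩ := round_weight d t a ha S ((q : ℝ) / m) hθ
    obtain ⟨I₁, hd₁, hu₁, hb₁⟩ := ih q hqm (by omega) A
    obtain ⟨I₂, hd₂, hu₂, hb₂⟩ := ih q' hq'm (by omega) (S \ A)
    have hsub1 : ∀ k, I₁ k ⊆ A := by
      intro k
      rw [← hu₁]
      exact Finset.subset_biUnion_of_mem I₁ (Finset.mem_univ k)
    have hsub2 : ∀ k, I₂ k ⊆ S \ A := by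
      intro k
      rw [← hu₂]
      exact Finset.subset_biUnion_of_mem I₂ (Finset.mem_univ k)
    set I : Fin m → Finset (Fin t) := fun k =>
      if h : (k : ℕ) < q then I₁ ⟨k, h⟩
      else I₂ ⟨(k : ℕ) - q, by have := k.isLt; omega⟩ with hIdef
    have hdisjAB : Disjoint A (S \ A) := Finset.disjoint_sdiff
    refine ⟨I, ?_, ?_, ?_⟩
    · -- disjointness
      intro k l hkl
      by_cases hk : (k : ℕ) < q <;> by_cases hl : (l : ℕ) < q <;>
        simp only [hIdef, dif_pos, dif_neg, hk, hl, dite_true, dite_false]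
      · refine hd₁ _ _ ?_
        intro heq
        rw [Fin.mk.injEq] at heq
        exact hkl (Fin.ext heq)
      · exact Finset.disjoint_of_subset_left (hsub1 _)
          (Finset.disjoint_of_subset_right (hsub2 _) hdisjAB)
      · exact Finset.disjoint_of_subset_left (hsub2 _)
          (Finset.disjoint_of_subset_right (hsub1 _) hdisjAB.symm)
      · refine hd₂ _ _ ?_
        intro heq
        rw [Fin.mk.injEq] at heq
        apply hkl
        apply Fin.ext
        have hk' := k.isLt
        have hl' := l.isLt
        omega
    · -- cover
      ext i
      simp only [Finset.mem_biUnion, Finset.mem_univ, true_and]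
      constructor
      · rintro ⟨k, hik⟩
        by_cases hk : (k : ℕ) < q
        · simp only [hIdef, dif_pos hk] at hik
          exact hAS (hsub1 _ hik)
        · simp only [hIdef, dif_neg hk] at hik
          exact (Finset.mem_sdiff.1 (hsub2 _ hik)).1
      · intro hiS
        by_cases hiA : i ∈ A
        · have : i ∈ Finset.univ.biUnion I₁ := hu₁ ▸ hiA
          obtain ⟨k₁, -, hik₁⟩ := Finset.mem_biUnion.1 this
          have hlt : (k₁ : ℕ) < m := lt_trans k₁.isLt hqm
          refine ⟨⟨k₁, hlt⟩, ?_⟩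
          have : I ⟨(k₁ : ℕ), hlt⟩ = I₁ k₁ := by
            simp only [hIdef]
            rw [dif_pos (show ((⟨(k₁ : ℕ), hlt⟩ : Fin m) : ℕ) < q from k₁.isLt)]
          rw [this]
          exact hik₁
        · have hiSA : i ∈ S \ A := Finset.mem_sdiff.2 ⟨hiS, hiA⟩
          have : i ∈ Finset.univ.biUnion I₂ := hu₂ ▸ hiSA
          obtain ⟨k₂, -, hik₂⟩ := Finset.mem_biUnion.1 this
          have hlt : q + (k₂ : ℕ) < m := by have := k₂.isLt; omega
          refine ⟨⟨q + (k₂ : ℕ), hlt⟩, ?_⟩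
          have : I ⟨q + (k₂ : ℕ), hlt⟩ = I₂ k₂ := by
            simp only [hIdef]
            rw [dif_neg (show ¬ ((⟨q + (k₂ : ℕ), hlt⟩ : Fin m) : ℕ) < q by simp)]
            exact congrArg I₂ (Fin.ext (by simp))
          rw [this]
          exact hik₂
    · -- bounds
      intro k j
      have hdnn : (0 : ℝ) ≤ d := Nat.cast_nonneg d
      have hmpos : (0 : ℝ) < m := by exact_mod_cast hm
      by_cases hk : (k : ℕ) < q
      · have hIeq : I k = I₁ ⟨k, hk⟩ := by simp only [hIdef, dif_pos hk]
        rw [hIeq]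
        refine chain_bound d q m _ _ _ hdnn (by exact_mod_cast hq1) hmpos
          (by exact_mod_cast h3q) (hb₁ ⟨k, hk⟩ j) (hA j)
      · have hIeq : I k = I₂ ⟨(k : ℕ) - q, by have := k.isLt; omega⟩ := by
          simp only [hIdef, dif_neg hk]
        rw [hIeq]
        have hA' : |(∑ i ∈ S \ A, a i j) - ((q' : ℝ) / m) * ∑ i ∈ S, a i j| ≤ d := by
          have hsd : (∑ i ∈ S \ A, a i j) + ∑ i ∈ A, a i j = ∑ i ∈ S, a i j :=
            Finset.sum_sdiff hAS
          have hcast : (q' : ℝ) = (m : ℝ) - q := by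
            have : (q : ℕ) ≤ m := le_of_lt hqm
            push_cast [hq'def, this]
            ring
          have : (∑ i ∈ S \ A, a i j) - ((q' : ℝ) / m) * ∑ i ∈ S, a i j
              = -((∑ i ∈ A, a i j) - ((q : ℝ) / m) * ∑ i ∈ S, a i j) := by
            rw [hcast, ← hsd]
            field_simp
            ring
          rw [this, abs_neg]
          exact hA j
        exact chain_bound d q' m _ _ _ hdnn (by exact_mod_cast hq'1) hmpos
          (by exact_mod_cast h3q') (hb₂ _ j) hA'

/-- Bárány–Doerr averaging lemma: vectors `a_1, …, a_t ∈ [0,1]^d` can be partitioned into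
`m` parts such that in each part every coordinate sum is within `3d` of the average. -/
theorem barany_doerr (d t m : ℕ) (hm : 0 < m) (a : Fin t → Fin d → ℝ)
    (ha : ∀ i j, a i j ∈ Set.Icc (0 : ℝ) 1) :
    ∃ I : Fin m → Finset (Fin t),
      (∀ k l, k ≠ l → Disjoint (I k) (I l)) ∧
      Finset.univ.biUnion I = Finset.univ ∧
      ∀ k, ∀ j, |(∑ i ∈ I k, a i j) - (1 / m) * ∑ i, a i j| ≤ 3 * d := by
  obtain ⟨I, hd, hu, hb⟩ := part_aux d t a ha m hm Finset.univ
  refine ⟨I, hd, hu, fun k j => ?_⟩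
  refine le_trans (hb k j) ?_
  have h1 : (0 : ℝ) ≤ 3 / m := by positivity
  have h2 : (0 : ℝ) ≤ d := Nat.cast_nonneg d
  nlinarith
end

section
/- Every tree T on n vertices is (δ, 2/δ)-separable for every δ ∈ (0,1): one can remove at most δn vertices from T so that every component of the remaining forest has at most 2/δ vertices. -/
open SimpleGraph

variable {V : Type} {G : SimpleGraph V}

/-- `u` and `v` are connected by a walk staying inside `A`. -/
def ConnIn (G : SimpleGraph V) (A : Set V) (u v : V) : Prop :=
  ∃ p : G.Walk u v, ∀ x ∈ p.support, x ∈ A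

/-- The connected component of `v` inside `A`. -/
def ccIn (G : SimpleGraph V) (A : Set V) (v : V) : Set V :=
  {u | ConnIn G A v u}

lemma ConnIn.symm {A : Set V} {u v : V} (h : ConnIn G A u v) : ConnIn G A v u := by
  obtain ⟨p, hp⟩ := h
  refine ⟨p.reverse, ?_⟩
  intro x hx
  rw [Walk.support_reverse] at hx
  exact hp x (List.mem_reverse.mp hx)

lemma ConnIn.trans {A : Set V} {u v w : V} (h : ConnIn G A u v) (h' : ConnIn G A v w) :
    ConnIn G A u w := by
  obtain ⟨p, hp⟩ := h
  obtain ⟨q, hq⟩ := h'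
  refine ⟨p.append q, ?_⟩
  intro x hx
  rcases (Walk.mem_support_append_iff p q).mp hx with h | h
  · exact hp x h
  · exact hq x h

lemma ConnIn.refl {A : Set V} {u : V} (hu : u ∈ A) : ConnIn G A u u :=
  ⟨Walk.nil, by simp [hu]⟩

lemma ConnIn.mono {A B : Set V} (hAB : A ⊆ B) {u v : V} (h : ConnIn G A u v) :
    ConnIn G B u v := by
  obtain ⟨p, hp⟩ := h
  exact ⟨p, fun x hx => hAB (hp x hx)⟩

lemma ConnIn.mem_left {A : Set V} {u v : V} (h : ConnIn G A u v) : u ∈ A := by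
  obtain ⟨p, hp⟩ := h; exact hp u p.start_mem_support

lemma ConnIn.mem_right {A : Set V} {u v : V} (h : ConnIn G A u v) : v ∈ A := by
  obtain ⟨p, hp⟩ := h; exact hp v p.end_mem_support

lemma ccIn_subset {A : Set V} {v : V} : ccIn G A v ⊆ A := fun _ h => h.mem_right

/-- everything on a witnessing walk is in the component -/
lemma ConnIn.support_mem {A : Set V} {u v : V} {p : G.Walk u v}
    (hp : ∀ x ∈ p.support, x ∈ A) {y : V} (hy : y ∈ p.support) : ConnIn G A u y := by
  classical
  exact ⟨p.takeUntil y hy, fun x hx => hp x (Walk.support_takeUntil_subset p hy hx)⟩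

lemma ccIn_eq {A : Set V} {u v : V} (h : ConnIn G A u v) : ccIn G A u = ccIn G A v := by
  ext x
  constructor
  · intro hx; exact h.symm.trans hx
  · intro hx; exact h.trans hx

/-- A walk starting inside `B \ {w}` that avoids `w` and stays in `A` remains in `B \ {w}`,
provided `B \ {w}` has all its `A`-neighbours inside `B`. -/
lemma confine {A B : Set V} {w : V}
    (hcl : ∀ b ∈ B \ {w}, ∀ x ∈ A, G.Adj b x → x ∈ B) :
    ∀ {u v : V} (p : G.Walk u v), u ∈ B \ {w} → (∀ x ∈ p.support, x ∈ A \ {w}) →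
      ∀ y ∈ p.support, y ∈ B \ {w} := by
  intro u v p
  induction p with
  | nil =>
    intro hu _ y hy
    simp only [Walk.support_nil, List.mem_singleton] at hy
    subst hy; exact hu
  | @cons a b c hadj p ih =>
    intro hu hsup y hy
    have hb : b ∈ B \ {w} := by
      have hbA : b ∈ A \ {w} := hsup b (by simp [Walk.support_cons])
      exact ⟨hcl a hu b hbA.1 hadj, hbA.2⟩
    rw [Walk.support_cons, List.mem_cons] at hy
    rcases hy with rfl | hy
    · exact hu
    · exact ih hb (fun x hx => hsup x (by simp [Walk.support_cons, hx])) y hy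

/-- A walk starting outside `B` that avoids `w` and stays in `A` remains outside `B`. -/
lemma avoidB {A B : Set V} {w : V}
    (hcl : ∀ b ∈ B \ {w}, ∀ x ∈ A, G.Adj b x → x ∈ B) :
    ∀ {u v : V} (p : G.Walk u v), u ∉ B → u ∈ A → (∀ x ∈ p.support, x ∈ A \ {w}) →
      ∀ y ∈ p.support, y ∉ B := by
  intro u v p
  induction p with
  | nil =>
    intro hu _ _ y hy
    simp only [Walk.support_nil, List.mem_singleton] at hy
    subst hy; exact hu
  | @cons a b c hadj p ih =>
    intro hu huA hsup y hy
    have hbA : b ∈ A \ {w} := hsup b (by simp [Walk.support_cons])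
    have hb : b ∉ B := by
      intro hbB
      exact hu (hcl b ⟨hbB, hbA.2⟩ a huA hadj.symm)
    rw [Walk.support_cons, List.mem_cons] at hy
    rcases hy with rfl | hy
    · exact hu
    · exact ih hb hbA.1 (fun x hx => hsup x (by simp [Walk.support_cons, hx])) y hy

/-- In an acyclic graph, a vertex has at most one neighbour in any connected set avoiding it. -/
lemma acyclic_unique_nbr [DecidableEq V] (hG : G.IsAcyclic) {r c0 c1 : V}
    (h0 : G.Adj r c0) (h1 : G.Adj r c1) (hne : c0 ≠ c1)
    (p : G.Walk c0 c1) (hp : r ∉ p.support) : False := by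
  have hq : r ∉ (p.toPath : G.Walk c0 c1).support :=
    fun h => hp (Walk.support_toPath_subset p h)
  let P1 : G.Path r c1 := ⟨Walk.cons h1 Walk.nil, by simp [h1.ne]⟩
  let P2 : G.Path r c1 := ⟨Walk.cons h0 (p.toPath : G.Walk c0 c1),
    (Walk.cons_isPath_iff _ _).mpr ⟨(p.toPath).property, hq⟩⟩
  have := isAcyclic_iff_path_unique.mp hG P1 P2
  have hsupp : (P1 : G.Walk r c1).support = (P2 : G.Walk r c1).support := by rw [this]
  have hc0 : c0 ∈ (P2 : G.Walk r c1).support := by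
    simp only [P2, Walk.support_cons, List.mem_cons]
    exact Or.inr (Walk.start_mem_support _)
  rw [← hsupp] at hc0
  simp only [P1, Walk.support_cons, Walk.support_nil, List.mem_cons, List.mem_singleton] at hc0
  rcases hc0 with h | h | h
  · exact h0.ne' h
  · exact hne h
  · simp at h

/-- Key lemma: in an acyclic graph, any `A` that is connected from `r` and has more than `K`
vertices contains a vertex `w` together with a "subtree" `B ∋ w` of size `> K` such that
`B \ {w}` has all its neighbours inside `B`, avoids `r`, and all components of `B \ {w}`
after removing `w` have size at most `K`. -/
lemma key_lemma [Fintype V] (hG : G.IsAcyclic) (K : ℕ) :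
    ∀ (n : ℕ) (A : Set V) (r : V), A.ncard ≤ n → r ∈ A →
      (∀ x ∈ A, ConnIn G A r x) → K + 1 ≤ A.ncard →
      ∃ w ∈ A, ∃ B ⊆ A, w ∈ B ∧ K + 1 ≤ B.ncard ∧ r ∉ B \ ({w} : Set V) ∧
        (∀ b ∈ B \ ({w} : Set V), ∀ x ∈ A, G.Adj b x → x ∈ B) ∧
        (∀ b ∈ B \ ({w} : Set V), (ccIn G (A \ {w}) b).ncard ≤ K) := by
  classical
  intro n
  induction n with
  | zero =>
    intro A r hn _ _ hK
    omega
  | succ n ih =>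
    intro A r hn hr hconn hK
    by_cases hbig : ∃ c' ∈ A \ ({r} : Set V), K + 1 ≤ (ccIn G (A \ {r}) c').ncard
    · -- recurse into the big component C of `A \ {r}`
      obtain ⟨c', hc', hCbig⟩ := hbig
      set C : Set V := ccIn G (A \ {r}) c' with hC
      have hCsub : C ⊆ A \ {r} := ccIn_subset
      have hCconn : ∀ x ∈ C, ConnIn G C c' x := by
        intro x hx
        obtain ⟨p, hp⟩ := hx
        refine ⟨p, fun y hy => ?_⟩
        exact ConnIn.support_mem hp hy
      -- choose the root of C : the neighbour of r if it exists
      have hsplit : ∃ ρ ∈ C, (∀ b ∈ C, G.Adj r b → b = ρ) := by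
        by_cases hex : ∃ c0 ∈ C, G.Adj r c0
        · obtain ⟨c0, hc0, hadj⟩ := hex
          refine ⟨c0, hc0, fun b hb hadjb => ?_⟩
          by_contra hne
          obtain ⟨p, hp⟩ := (hCconn b hb).symm.trans (hCconn c0 hc0)
          exact acyclic_unique_nbr hG hadjb hadj hne p
            (fun hmem => (hCsub (hp r hmem)).2 rfl)
        · refine ⟨c', ConnIn.refl hc', fun b hb hadjb => ?_⟩
          exact absurd ⟨b, hb, hadjb⟩ hex
      obtain ⟨ρ, hρ, hρuniq⟩ := hsplit
      have hρconn : ∀ x ∈ C, ConnIn G C ρ x := fun x hx =>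
        (hCconn ρ hρ).symm.trans (hCconn x hx)
      have hCcard : C.ncard ≤ n := by
        have h1 : C.ncard ≤ (A \ {r}).ncard := Set.ncard_le_ncard hCsub (Set.toFinite _)
        have h2 : (A \ {r}).ncard = A.ncard - 1 := by
          rw [← Set.ncard_singleton r, Set.ncard_diff (by simpa using hr)]
        omega
      obtain ⟨w, hwC, B, hBC, hwB, hBcard, hρB, hclC, hcompC⟩ :=
        ih C ρ hCcard hρ hρconn hCbig
      have hwA : w ∈ A := (hCsub hwC).1
      -- closure with respect to A
      have hclA : ∀ b ∈ B \ ({w} : Set V), ∀ x ∈ A, G.Adj b x → x ∈ B := by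
        intro b hb x hx hadj
        by_cases hxr : x = r
        · subst hxr
          exact absurd (hρuniq b (hBC hb.1) hadj.symm ▸ hb) hρB
        · have hxC : x ∈ C := by
            have : ConnIn G (A \ {r}) b x := ⟨Walk.cons hadj Walk.nil, by
              intro y hy
              simp only [Walk.support_cons, Walk.support_nil, List.mem_cons,
                List.mem_singleton] at hy
              rcases hy with rfl | rfl | h
              · exact hCsub (hBC hb.1)
              · exact ⟨hx, hxr⟩
              · simp at h⟩
            exact ConnIn.trans (hBC hb.1) this
          exact hclC b hb x hxC hadj
      refine ⟨w, hwA, B, fun x hx => (hCsub (hBC hx)).1, hwB, hBcard, ?_, hclA, ?_⟩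
      · intro hrB
        exact (hCsub (hBC hrB.1)).2 rfl
      · intro b hb
        have hsub : ccIn G (A \ {w}) b ⊆ ccIn G (C \ {w}) b := by
          intro u hu
          obtain ⟨p, hp⟩ := hu
          have hall := confine (G := G) hclA p (by
            exact ⟨hb.1, hb.2⟩) (fun x hx => hp x hx)
          refine ⟨p, fun y hy => ?_⟩
          have hyB := hall y hy
          exact ⟨hBC hyB.1, hyB.2⟩
        calc (ccIn G (A \ {w}) b).ncard ≤ (ccIn G (C \ {w}) b).ncard :=
              Set.ncard_le_ncard hsub (Set.toFinite _)
          _ ≤ K := hcompC b hb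
    · -- all components of A \ {r} are small : take w = r, B = A
      push_neg at hbig
      refine ⟨r, hr, A, le_refl _, hr, hK, by simp, fun b _ x hx _ => hx, ?_⟩
      intro b hb
      have := hbig b hb
      omega

/-- Main separation lemma for acyclic graphs. -/
lemma main_sep [Fintype V] (hG : G.IsAcyclic) (K : ℕ) :
    ∀ (n : ℕ) (A : Set V), A.ncard = n →
      ∃ S : Set V, S ⊆ A ∧ (K + 1) * S.ncard ≤ n ∧
        ∀ v ∈ A \ S, (ccIn G (A \ S) v).ncard ≤ K := by
  classical
  intro n
  induction n using Nat.strong_induction_on with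
  | _ n ih =>
    intro A hA
    by_cases hbig : ∃ v ∈ A, K + 1 ≤ (ccIn G A v).ncard
    · obtain ⟨v, hv, hbig⟩ := hbig
      set H : Set V := ccIn G A v with hH
      have hHsub : H ⊆ A := ccIn_subset
      have hHconn : ∀ x ∈ H, ConnIn G H v x := by
        intro x hx
        obtain ⟨p, hp⟩ := hx
        exact ⟨p, fun y hy => ConnIn.support_mem hp hy⟩
      obtain ⟨w, hwH, B, hBH, hwB, hBcard, -, hclH, hcompH⟩ :=
        key_lemma hG K H.ncard H v (le_refl _) (ConnIn.refl hv) hHconn hbig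
      -- closure with respect to A
      have hclA : ∀ b ∈ B \ ({w} : Set V), ∀ x ∈ A, G.Adj b x → x ∈ B := by
        intro b hb x hx hadj
        have hxH : x ∈ H := by
          have : ConnIn G A b x := ⟨Walk.cons hadj Walk.nil, by
            intro y hy
            simp only [Walk.support_cons, Walk.support_nil, List.mem_cons,
              List.mem_singleton] at hy
            rcases hy with rfl | rfl | h
            · exact hHsub (hBH hb.1)
            · exact hx
            · simp at h⟩
          exact ConnIn.trans (hBH hb.1) this
        exact hclH b hb x hxH hadj
      have hBA : B ⊆ A := fun x hx => hHsub (hBH hx)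
      set A' : Set V := A \ B with hA'
      have hA'card : A'.ncard = A.ncard - B.ncard := Set.ncard_diff hBA
      have hBne : 0 < B.ncard := (Set.ncard_pos (Set.toFinite _)).mpr ⟨w, hwB⟩
      have hBle : B.ncard ≤ A.ncard := Set.ncard_le_ncard hBA (Set.toFinite _)
      have hlt : A'.ncard < n := by omega
      obtain ⟨S', hS'sub, hS'card, hS'comp⟩ := ih A'.ncard hlt A' rfl
      refine ⟨insert w S', ?_, ?_, ?_⟩
      · intro x hx
        rcases hx with rfl | hx
        · exact hHsub (hBH hwB)
        · exact (hS'sub hx).1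
      · have hwS' : w ∉ S' := fun h => (hS'sub h).2 hwB
        rw [Set.ncard_insert_of_notMem hwS' (Set.toFinite _), Nat.mul_add, Nat.mul_one]
        omega
      · intro v' hv'
        have hv'A : v' ∈ A := hv'.1
        have hv'w : v' ≠ w := fun h => hv'.2 (by rw [h]; exact Set.mem_insert _ _)
        have hv'S' : v' ∉ S' := fun h => hv'.2 (Set.mem_insert_of_mem _ h)
        have hsubw : A \ insert w S' ⊆ A \ {w} :=
          Set.diff_subset_diff_right
            (Set.singleton_subset_iff.mpr (Set.mem_insert _ _))
        by_cases hv'B : v' ∈ B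
        · -- inside B
          have hsub : ccIn G (A \ insert w S') v' ⊆ ccIn G (H \ {w}) v' := by
            intro u hu
            obtain ⟨p, hp⟩ := hu
            have hall := confine (G := G) hclA p ⟨hv'B, hv'w⟩
              (fun x hx => hsubw (hp x hx))
            refine ⟨p, fun y hy => ?_⟩
            have hyB := hall y hy
            exact ⟨hBH hyB.1, hyB.2⟩
          calc (ccIn G (A \ insert w S') v').ncard
              ≤ (ccIn G (H \ {w}) v').ncard := Set.ncard_le_ncard hsub (Set.toFinite _)
            _ ≤ K := hcompH v' ⟨hv'B, hv'w⟩
        · -- outside B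
          have hsub : ccIn G (A \ insert w S') v' ⊆ ccIn G (A' \ S') v' := by
            intro u hu
            obtain ⟨p, hp⟩ := hu
            have havoid := avoidB (G := G) hclA p hv'B hv'A
              (fun x hx => hsubw (hp x hx))
            refine ⟨p, fun y hy => ?_⟩
            have hyA := hp y hy
            exact ⟨⟨hyA.1, havoid y hy⟩, fun h => hyA.2 (Set.mem_insert_of_mem _ h)⟩
          calc (ccIn G (A \ insert w S') v').ncard
              ≤ (ccIn G (A' \ S') v').ncard := Set.ncard_le_ncard hsub (Set.toFinite _)
            _ ≤ K := hS'comp v' ⟨⟨hv'A, hv'B⟩, hv'S'⟩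
    · push_neg at hbig
      refine ⟨∅, Set.empty_subset _, by simp, ?_⟩
      intro v hv
      rw [Set.diff_empty]
      have := hbig v hv.1
      omega

/-- Every tree on `n` vertices is `(δ, 2/δ)`-separable for every `δ ∈ (0,1)`. -/
theorem tree_separable {V : Type} [Fintype V] (T : SimpleGraph V) (hT : T.IsTree)
    (δ : ℝ) (hδ : δ ∈ Set.Ioo (0 : ℝ) 1) :
    ∃ S : Set V, (S.ncard : ℝ) ≤ δ * Fintype.card V ∧
      ∀ comp : (T.induce Sᶜ).ConnectedComponent, (comp.supp.ncard : ℝ) ≤ 2 / δ := by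
  classical
  obtain ⟨hδ0, hδ1⟩ := hδ
  set K : ℕ := ⌊(2 : ℝ) / δ⌋₊ with hK
  have hKle : (K : ℝ) ≤ 2 / δ := Nat.floor_le (by positivity)
  have hKgt : (2 : ℝ) / δ < K + 1 := Nat.lt_floor_add_one _
  obtain ⟨S, hSsub, hScard, hcomp⟩ :=
    main_sep (G := T) hT.2 K (Set.univ : Set V).ncard Set.univ rfl
  refine ⟨S, ?_, ?_⟩
  · have hn : ((Set.univ : Set V).ncard : ℝ) = Fintype.card V := by
      rw [Set.ncard_univ, Nat.card_eq_fintype_card]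
    have h1 : ((K + 1 : ℕ) : ℝ) * (S.ncard : ℝ) ≤ Fintype.card V := by
      rw [← hn]
      exact_mod_cast hScard
    have h2 : (1 : ℝ) ≤ δ * ((K : ℝ) + 1) := by
      have h3 : (2 : ℝ) ≤ δ * ((K : ℝ) + 1) := by
        have : δ * (2 / δ) ≤ δ * ((K : ℝ) + 1) :=
          mul_le_mul_of_nonneg_left (le_of_lt hKgt) (le_of_lt hδ0)
        rwa [mul_div_cancel₀ _ (ne_of_gt hδ0)] at this
      linarith
    have hcast : ((K + 1 : ℕ) : ℝ) = (K : ℝ) + 1 := by push_cast; ring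
    nlinarith [Nat.cast_nonneg (α := ℝ) S.ncard, Nat.cast_nonneg (α := ℝ) (Fintype.card V)]
  · intro comp
    obtain ⟨v, hv⟩ := comp.exists_rep
    have hvS : (v : V) ∈ Set.univ \ S := ⟨Set.mem_univ _, v.2⟩
    have hsub : Subtype.val '' comp.supp ⊆ ccIn T (Set.univ \ S) (v : V) := by
      rintro _ ⟨u, hu, rfl⟩
      rw [SimpleGraph.ConnectedComponent.mem_supp_iff, ← hv] at hu
      obtain ⟨p⟩ := SimpleGraph.ConnectedComponent.eq.mp hu
      refine ConnIn.symm ⟨p.map (SimpleGraph.Embedding.induce Sᶜ).toHom, ?_⟩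
      intro x hx
      replace hx : x ∈ (p.map (SimpleGraph.Embedding.induce Sᶜ).toHom).support := hx
      rw [SimpleGraph.Walk.support_map] at hx
      obtain ⟨z, _, rfl⟩ := List.mem_map.mp hx
      exact ⟨Set.mem_univ _, z.2⟩
    have hle : comp.supp.ncard ≤ K := by
      calc comp.supp.ncard = (Subtype.val '' comp.supp).ncard :=
            (Set.ncard_image_of_injective _ Subtype.val_injective).symm
        _ ≤ (ccIn T (Set.univ \ S) (v : V)).ncard := Set.ncard_le_ncard hsub (Set.toFinite _)
        _ ≤ K := hcomp (v : V) hvS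
    calc (comp.supp.ncard : ℝ) ≤ (K : ℝ) := by exact_mod_cast hle
      _ ≤ 2 / δ := hKle
end

section
/- Matching–extension correspondence: let G be a graph, H a graph, I a 2-independent set in H, and g an embedding of H − I into G such that the sets g(N_H(v)) for v ∈ I are pairwise disjoint. Define the bipartite graph B with parts {g(N_H(v)) : v ∈ I} and V(G) \ Im(g), where X is adjacent to x iff x is adjacent in G to every vertex of X. If |I| = |V(G) \ Im(g)|, then g extends to an embedding of H into G if and only if B contains a perfect matching. -/
/-- Matching–extension correspondence: let `I` be a 2-independent set in `H` and let
`g` be an embedding (injective homomorphism) of `H − I` into `G` such that the sets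
`g(N_H(v))`, `v ∈ I`, are pairwise disjoint and `|I| = |V(G) \ Im g|`. Then `g`
extends to an embedding of `H` into `G` if and only if the auxiliary bipartite graph
(with parts `{g(N_H(v)) : v ∈ I}` and `V(G) \ Im g`, and `X ∼ x` iff `x` is adjacent
in `G` to every vertex of `X`) has a perfect matching. -/
theorem matching_extension_correspondence {α β : Type} [Fintype α] [Fintype β]
    (H : SimpleGraph α) (G : SimpleGraph β) (I : Set α)
    (h2ind : ∀ u ∈ I, ∀ v ∈ I, u ≠ v →
      ¬ H.Adj u v ∧ Disjoint (H.neighborSet u) (H.neighborSet v))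
    (g : α → β) (hginj : Set.InjOn g Iᶜ)
    (ghom : ∀ u ∈ Iᶜ, ∀ v ∈ Iᶜ, H.Adj u v → G.Adj (g u) (g v))
    (hXdisj : I.Pairwise fun u v =>
      Disjoint (g '' H.neighborSet u) (g '' H.neighborSet v))
    (hcard : I.ncard = ((g '' Iᶜ)ᶜ : Set β).ncard) :
    (∃ h : α → β, Function.Injective h ∧
        (∀ u v, H.Adj u v → G.Adj (h u) (h v)) ∧ ∀ u ∈ Iᶜ, h u = g u) ↔
    (∃ m : α → β, Set.InjOn m I ∧ (∀ v ∈ I, m v ∈ (g '' Iᶜ)ᶜ) ∧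
        ∀ v ∈ I, ∀ u ∈ H.neighborSet v, G.Adj (g u) (m v)) := by
  have hnbr : ∀ v ∈ I, ∀ u, H.Adj v u → u ∉ I := by
    intro v hv u hadj hu
    have hne : v ≠ u := fun h => H.irrefl (h ▸ hadj)
    exact (h2ind v hv u hu hne).1 hadj
  constructor
  · rintro ⟨h, hinj, hhom, hext⟩
    refine ⟨h, hinj.injOn, ?_, ?_⟩
    · intro v hv
      rintro ⟨u, hu, hgu⟩
      have : h u = h v := by rw [hext u hu, hgu]
      exact hu (hinj this ▸ hv)
    · intro v hv u hu
      have huI : u ∉ I := hnbr v hv u hu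
      have := hhom u v hu.symm
      rwa [hext u huI] at this
  · rintro ⟨m, minj, mout, madj⟩
    classical
    refine ⟨fun a => if a ∈ I then m a else g a, ?_, ?_, ?_⟩
    · intro a b hab
      by_cases ha : a ∈ I <;> by_cases hb : b ∈ I <;> simp [ha, hb] at hab
      · exact minj ha hb hab
      · exact absurd ⟨b, hb, hab.symm⟩ (mout a ha)
      · exact absurd ⟨a, ha, hab⟩ (mout b hb)
      · exact hginj ha hb hab
    · intro u v hadj
      by_cases hu : u ∈ I <;> by_cases hv : v ∈ I <;> simp only [if_pos, if_neg, hu, hv,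
        if_true, if_false]
      · exact absurd hv (hnbr u hu v hadj)
      · exact (madj u hu v ((H.mem_neighborSet u v).mpr hadj)).symm
      · exact madj v hv u ((H.mem_neighborSet v u).mpr hadj.symm)
      · exact ghom u hu v hv hadj
    · intro u hu
      exact if_neg hu
end

section
/- Local resilience of B(n,p) for perfect matchings: for every constant ε > 0 and p = p(n) with np/log n → ∞, with probability 1 − o(1/n), the random bipartite graph B(n,p) has the property that every subgraph obtained by deleting at most (1−ε)np/2 edges at each vertex still contains a perfect matching. -/
open MeasureTheory

/-- The distribution of the random bipartite graph `B(n,p)`: each of the `n²`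
potential cross edges is present independently with probability `p`. -/
noncomputable def bipartiteRandomGraph (n : ℕ) (p : ℝ) :
    Measure ((Fin n × Fin n) → Bool) :=
  Measure.pi fun _ =>
    ENNReal.ofReal p • Measure.dirac true +
      ENNReal.ofReal (1 - p) • Measure.dirac false

/-- `ω` (a bipartite graph on `[n] + [n]`, given by its indicator of cross edges) has
the property that every spanning subgraph obtained by deleting at most `r` edges at
each vertex still contains a perfect matching. -/
def matchingResilient (n : ℕ) (r : ℝ) (ω : Fin n × Fin n → Bool) : Prop :=
  ∀ E' : Fin n × Fin n → Bool,
    (∀ e, E' e = true → ω e = true) →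
    (∀ v : Fin n,
      ((Finset.univ.filter fun j => ω (v, j) = true ∧ E' (v, j) = false).card : ℝ) ≤ r ∧
      ((Finset.univ.filter fun i => ω (i, v) = true ∧ E' (i, v) = false).card : ℝ) ≤ r) →
    ∃ σ : Equiv.Perm (Fin n), ∀ i, E' (i, σ i) = true

open MeasureTheory Finset
open scoped ENNReal NNReal

namespace BMR
attribute [local instance] Classical.propDecidable

noncomputable def w (p : ℝ) (b : Bool) : ℝ≥0∞ :=
  if b then ENNReal.ofReal p else ENNReal.ofReal (1-p)

def cnt {n : ℕ} (E : Finset (Fin n × Fin n)) (ω : (Fin n × Fin n) → Bool) : ℕ :=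
  (E.filter fun e => ω e = true).card

variable {n : ℕ} {p : ℝ}

lemma factor_singleton (hp0 : 0 ≤ p) (hp1 : p ≤ 1) (b : Bool) :
    (ENNReal.ofReal p • Measure.dirac true +
      ENNReal.ofReal (1 - p) • Measure.dirac (false : Bool)) {b} = w p b := by
  have hmb : MeasurableSet ({b} : Set Bool) := measurableSet_singleton b
  simp only [Measure.add_apply, Measure.smul_apply, smul_eq_mul,
    Measure.dirac_apply' _ hmb]
  cases b <;> simp [w, Set.indicator, ENNReal.ofReal_eq_zero]

instance factor_finite : ∀ (p : ℝ), IsFiniteMeasure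
    (ENNReal.ofReal p • Measure.dirac true +
      ENNReal.ofReal (1 - p) • Measure.dirac (false : Bool)) := by
  intro p
  constructor
  simp only [Measure.add_apply, Measure.smul_apply, smul_eq_mul, measure_univ, mul_one]
  exact ENNReal.add_lt_top.2 ⟨ENNReal.ofReal_lt_top, ENNReal.ofReal_lt_top⟩

lemma measure_singleton (hp0 : 0 ≤ p) (hp1 : p ≤ 1) (ω₀ : (Fin n × Fin n) → Bool) :
    bipartiteRandomGraph n p {ω₀} = ∏ e : Fin n × Fin n, w p (ω₀ e) := by
  have : ({ω₀} : Set ((Fin n × Fin n) → Bool)) = Set.univ.pi (fun e => {ω₀ e}) := by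
    ext ω; simp [funext_iff, Set.mem_pi, eq_comm]
  rw [bipartiteRandomGraph, this, Measure.pi_pi]
  exact Finset.prod_congr rfl fun e _ => factor_singleton hp0 hp1 (ω₀ e)

lemma measure_le_sum (hp0 : 0 ≤ p) (hp1 : p ≤ 1) (S : Set ((Fin n × Fin n) → Bool)) :
    bipartiteRandomGraph n p S ≤
      ∑ ω ∈ Finset.univ.filter (fun ω => ω ∈ S), ∏ e, w p (ω e) := by
  classical
  have hsub : S ⊆ ⋃ ω ∈ Finset.univ.filter (fun ω => ω ∈ S), ({ω} : Set _) := by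
    intro ω hω; simp only [Set.mem_iUnion]; exact ⟨ω, by simpa using hω, rfl⟩
  calc bipartiteRandomGraph n p S ≤ _ := measure_mono hsub
    _ ≤ ∑ ω ∈ Finset.univ.filter (fun ω => ω ∈ S), bipartiteRandomGraph n p {ω} :=
        measure_biUnion_finset_le _ _
    _ = _ := Finset.sum_congr rfl fun ω _ => measure_singleton hp0 hp1 ω


lemma prob_sum (hp0 : 0 ≤ p) (hp1 : p ≤ 1) :
    ENNReal.ofReal p + ENNReal.ofReal (1-p) = 1 := by
  rw [← ENNReal.ofReal_add hp0 (by linarith)]; norm_num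

lemma mgf (hp0 : 0 ≤ p) (hp1 : p ≤ 1) (E : Finset (Fin n × Fin n)) (q : ℝ≥0∞) :
    ∑ ω : (Fin n × Fin n) → Bool, q ^ (cnt E ω) * ∏ e, w p (ω e)
      = (q * ENNReal.ofReal p + ENNReal.ofReal (1-p)) ^ E.card := by
  classical
  have key : ∀ ω : (Fin n × Fin n) → Bool,
      q ^ (cnt E ω) * ∏ e, w p (ω e)
        = ∏ e : Fin n × Fin n, ((if e ∈ E ∧ ω e = true then q else 1) * w p (ω e)) := by
    intro ω
    rw [Finset.prod_mul_distrib]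
    congr 1
    rw [cnt, ← Finset.prod_const, Finset.prod_filter]
    rw [← Finset.prod_subset (Finset.subset_univ E)
      (fun e _ he => by simp [he] : ∀ e ∈ Finset.univ, e ∉ E →
        (if e ∈ E ∧ ω e = true then q else 1) = 1)]
    exact Finset.prod_congr rfl fun e he => by simp [he]
  calc ∑ ω : (Fin n × Fin n) → Bool, q ^ (cnt E ω) * ∏ e, w p (ω e)
      = ∑ ω : (Fin n × Fin n) → Bool,
          ∏ e : Fin n × Fin n, ((if e ∈ E ∧ ω e = true then q else 1) * w p (ω e)) :=
        Finset.sum_congr rfl fun ω _ => key ω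
    _ = ∏ e : Fin n × Fin n, ∑ b : Bool, ((if e ∈ E ∧ b = true then q else 1) * w p b) := by
        rw [← Fintype.piFinset_univ, ← Finset.prod_univ_sum (fun _ => (Finset.univ : Finset Bool))
          (fun e b => (if e ∈ E ∧ b = true then q else 1) * w p b)]
    _ = ∏ e : Fin n × Fin n,
          (if e ∈ E then q * ENNReal.ofReal p + ENNReal.ofReal (1-p) else 1) := by
        refine Finset.prod_congr rfl fun e _ => ?_
        by_cases h : e ∈ E <;>
          simp [Fintype.sum_bool, h, w, prob_sum hp0 hp1, one_mul]
    _ = (q * ENNReal.ofReal p + ENNReal.ofReal (1-p)) ^ E.card := by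
        rw [Finset.prod_ite_mem, Finset.univ_inter, Finset.prod_const]

lemma tail (hp0 : 0 ≤ p) (hp1 : p ≤ 1) (E : Finset (Fin n × Fin n)) (q : ℝ≥0∞)
    (k : ℕ) (S : Set ((Fin n × Fin n) → Bool))
    (hS : ∀ ω ∈ S, q ^ k ≤ q ^ cnt E ω) :
    bipartiteRandomGraph n p S * q ^ k
      ≤ (q * ENNReal.ofReal p + ENNReal.ofReal (1-p)) ^ E.card := by
  classical
  calc bipartiteRandomGraph n p S * q ^ k
      ≤ (∑ ω ∈ Finset.univ.filter (fun ω => ω ∈ S), ∏ e, w p (ω e)) * q ^ k :=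
        mul_le_mul_left (measure_le_sum hp0 hp1 S) _
    _ = ∑ ω ∈ Finset.univ.filter (fun ω => ω ∈ S), q ^ k * ∏ e, w p (ω e) := by
        rw [Finset.sum_mul]; exact Finset.sum_congr rfl fun ω _ => mul_comm _ _
    _ ≤ ∑ ω ∈ Finset.univ.filter (fun ω => ω ∈ S), q ^ cnt E ω * ∏ e, w p (ω e) :=
        Finset.sum_le_sum fun ω hω => mul_le_mul_left
          (hS ω (by simpa using hω)) _
    _ ≤ ∑ ω : (Fin n × Fin n) → Bool, q ^ cnt E ω * ∏ e, w p (ω e) :=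
        Finset.sum_le_sum_of_subset (Finset.filter_subset _ _)
    _ = _ := mgf hp0 hp1 E q

lemma div_cleanup {A B : ℝ} (hB : 0 < B) {mu : ℝ≥0∞}
    (h : mu * ENNReal.ofReal B ≤ ENNReal.ofReal A) :
    mu ≤ ENNReal.ofReal (A / B) := by
  rw [ENNReal.ofReal_div_of_pos hB]
  rw [ENNReal.le_div_iff_mul_le (Or.inl (ENNReal.ofReal_pos.2 hB).ne') (Or.inl ENNReal.ofReal_ne_top)]
  exact h

lemma factor_le (hp0 : 0 ≤ p) (hp1 : p ≤ 1) {x : ℝ} (hx : 0 ≤ x) :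
    ENNReal.ofReal x * ENNReal.ofReal p + ENNReal.ofReal (1-p)
      ≤ ENNReal.ofReal (Real.exp (p * (x - 1))) := by
  rw [← ENNReal.ofReal_mul hx, ← ENNReal.ofReal_add (by positivity) (by linarith)]
  refine ENNReal.ofReal_le_ofReal ?_
  nlinarith [Real.add_one_le_exp (p * (x - 1))]

lemma pow_factor_le (hp0 : 0 ≤ p) (hp1 : p ≤ 1) {x : ℝ} (hx : 0 ≤ x) (m : ℕ) :
    (ENNReal.ofReal x * ENNReal.ofReal p + ENNReal.ofReal (1-p)) ^ m
      ≤ ENNReal.ofReal (Real.exp ((m : ℝ) * (p * (x - 1)))) := by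
  calc (ENNReal.ofReal x * ENNReal.ofReal p + ENNReal.ofReal (1-p)) ^ m
      ≤ (ENNReal.ofReal (Real.exp (p * (x - 1)))) ^ m :=
        pow_le_pow_left' (factor_le hp0 hp1 hx) m
    _ = ENNReal.ofReal (Real.exp (p * (x - 1)) ^ m) := by
        rw [← ENNReal.ofReal_pow (Real.exp_nonneg _)]
    _ = _ := by rw [← Real.exp_nat_mul]

lemma upper_tail (hp0 : 0 ≤ p) (hp1 : p ≤ 1) (E : Finset (Fin n × Fin n))
    (lam k : ℝ) (hlam : 0 ≤ lam) (hk : 0 ≤ k) :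
    bipartiteRandomGraph n p {ω | k ≤ (cnt E ω : ℝ)}
      ≤ ENNReal.ofReal (Real.exp ((E.card : ℝ) * (p * (Real.exp lam - 1)) - lam * k)) := by
  set q : ℝ≥0∞ := ENNReal.ofReal (Real.exp lam) with hq
  have hq1 : 1 ≤ q := ENNReal.one_le_ofReal.2 (Real.one_le_exp hlam)
  have hT := tail hp0 hp1 E q ⌈k⌉₊ {ω | k ≤ (cnt E ω : ℝ)} (fun ω hω => by
    refine pow_le_pow_right' hq1 ?_
    exact Nat.ceil_le.2 (by exact_mod_cast hω))
  have h2 : bipartiteRandomGraph n p {ω | k ≤ (cnt E ω : ℝ)} *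
      ENNReal.ofReal (Real.exp (lam * ⌈k⌉₊)) ≤
      ENNReal.ofReal (Real.exp ((E.card : ℝ) * (p * (Real.exp lam - 1)))) := by
    have : q ^ (⌈k⌉₊ : ℕ) = ENNReal.ofReal (Real.exp (lam * ⌈k⌉₊)) := by
      rw [hq, ← ENNReal.ofReal_pow (Real.exp_nonneg _), ← Real.exp_nat_mul, mul_comm]
    rw [← this]
    exact hT.trans (pow_factor_le hp0 hp1 (Real.exp_nonneg _) E.card)
  have h3 := div_cleanup (Real.exp_pos _) h2
  refine h3.trans (ENNReal.ofReal_le_ofReal ?_)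
  rw [← Real.exp_sub]
  refine Real.exp_le_exp.2 ?_
  have : lam * k ≤ lam * ⌈k⌉₊ := by
    have := Nat.le_ceil k
    nlinarith
  linarith

lemma lower_tail (hp0 : 0 ≤ p) (hp1 : p ≤ 1) (E : Finset (Fin n × Fin n))
    (lam a : ℝ) (hlam : 0 ≤ lam) (ha : 0 ≤ a) :
    bipartiteRandomGraph n p {ω | (cnt E ω : ℝ) ≤ a}
      ≤ ENNReal.ofReal (Real.exp ((E.card : ℝ) * (p * (Real.exp (-lam) - 1)) + lam * a)) := by
  set q : ℝ≥0∞ := ENNReal.ofReal (Real.exp (-lam)) with hq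
  have hq1 : q ≤ 1 := by
    rw [hq, ← ENNReal.ofReal_one]
    exact ENNReal.ofReal_le_ofReal (Real.exp_le_one_iff.2 (by linarith))
  have hT := tail hp0 hp1 E q ⌊a⌋₊ {ω | (cnt E ω : ℝ) ≤ a} (fun ω hω => by
    refine pow_le_pow_right_of_le_one' hq1 ?_
    exact Nat.le_floor (by exact_mod_cast hω))
  have h2 : bipartiteRandomGraph n p {ω | (cnt E ω : ℝ) ≤ a} *
      ENNReal.ofReal (Real.exp (-(lam * ⌊a⌋₊))) ≤
      ENNReal.ofReal (Real.exp ((E.card : ℝ) * (p * (Real.exp (-lam) - 1)))) := by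
    have : q ^ (⌊a⌋₊ : ℕ) = ENNReal.ofReal (Real.exp (-(lam * ⌊a⌋₊))) := by
      rw [hq, ← ENNReal.ofReal_pow (Real.exp_nonneg _), ← Real.exp_nat_mul]
      ring_nf
    rw [← this]
    exact hT.trans (pow_factor_le hp0 hp1 (Real.exp_nonneg _) E.card)
  have h3 := div_cleanup (Real.exp_pos _) h2
  refine h3.trans (ENNReal.ofReal_le_ofReal ?_)
  rw [← Real.exp_sub]
  refine Real.exp_le_exp.2 ?_
  have h4 : lam * ⌊a⌋₊ ≤ lam * a := by
    have h5 : (⌊a⌋₊ : ℝ) ≤ a := Nat.floor_le ha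
    nlinarith
  linarith


def degL {n : ℕ} (ω : (Fin n × Fin n) → Bool) (v : Fin n) : ℕ :=
  (Finset.univ.filter fun j => ω (v, j) = true).card

def degR {n : ℕ} (ω : (Fin n × Fin n) → Bool) (v : Fin n) : ℕ :=
  (Finset.univ.filter fun i => ω (i, v) = true).card

lemma cnt_prod_left (E' : (Fin n × Fin n) → Bool) (S Y : Finset (Fin n)) :
    cnt (S ×ˢ Y) E' = ∑ i ∈ S, (Y.filter fun j => E' (i, j) = true).card := by
  classical
  rw [cnt, Finset.card_filter, Finset.sum_product]
  exact Finset.sum_congr rfl fun i _ => (Finset.card_filter _ _).symm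

lemma cnt_prod_right (E' : (Fin n × Fin n) → Bool) (S Y : Finset (Fin n)) :
    cnt (S ×ˢ Y) E' = ∑ j ∈ Y, (S.filter fun i => E' (i, j) = true).card := by
  classical
  rw [cnt, Finset.card_filter, Finset.sum_product_right]
  exact Finset.sum_congr rfl fun j _ => (Finset.card_filter _ _).symm

lemma filter_eq_of_subset {α : Type*} [DecidableEq α] [Fintype α] (Y : Finset α) (q : α → Prop)
    [DecidablePred q] (h : Finset.univ.filter q ⊆ Y) :
    Y.filter q = Finset.univ.filter q := by
  ext j
  simp only [Finset.mem_filter, Finset.mem_univ, true_and]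
  exact ⟨fun hj => hj.2, fun hj => ⟨h (by simp [hj]), hj⟩⟩

lemma cnt_mono (ω E' : (Fin n × Fin n) → Bool) (A : Finset (Fin n × Fin n))
    (h : ∀ e, E' e = true → ω e = true) : cnt A E' ≤ cnt A ω :=
  Finset.card_le_card (Finset.monotone_filter_right A (fun e _ he => h e he))

lemma resilient_of_good (hp0 : 0 ≤ p) {ε' r : ℝ} (hε : 0 < ε')
    (hr : r ≤ (1 - ε') * n * p / 2)
    (ω : (Fin n × Fin n) → Bool)
    (hA : ∀ v, (1 - ε'/4) * n * p ≤ (degL ω v : ℝ) ∧ (1 - ε'/4) * n * p ≤ (degR ω v : ℝ))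
    (hB : ∀ X Y : Finset (Fin n), 2*X.card ≤ n+1 → Y.card < X.card →
        (cnt (X ×ˢ Y) ω : ℝ) < X.card * ((1/2 + ε'/4) * n * p))
    (hB' : ∀ X Y : Finset (Fin n), 2*Y.card ≤ n+1 → X.card < Y.card →
        (cnt (X ×ˢ Y) ω : ℝ) < Y.card * ((1/2 + ε'/4) * n * p)) :
    matchingResilient n r ω := by
  classical
  intro E' hsub hdel
  set d : ℝ := (1/2 + ε'/4) * n * p with hd
  set t : Fin n → Finset (Fin n) := fun i => Finset.univ.filter fun j => E' (i, j) = true with ht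
  set t' : Fin n → Finset (Fin n) := fun j => Finset.univ.filter fun i => E' (i, j) = true with ht'
  -- degree lower bounds in the subgraph
  have hnp : (0:ℝ) ≤ (n:ℝ) * p := by positivity
  have hdegL : ∀ i, d ≤ ((t i).card : ℝ) := by
    intro i
    have hsub1 : t i ⊆ Finset.univ.filter fun j => ω (i, j) = true :=
      fun j hj => by
        simp only [ht, Finset.mem_filter, Finset.mem_univ, true_and] at hj ⊢
        exact hsub _ hj
    have hdel1 : (Finset.univ.filter fun j => ω (i, j) = true ∧ E' (i, j) = false)
        = (Finset.univ.filter fun j => ω (i, j) = true) \ t i := by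
      ext j
      simp only [ht, Finset.mem_filter, Finset.mem_sdiff, Finset.mem_univ, true_and,
        Bool.not_eq_true]
    have hcard := Finset.card_sdiff_of_subset hsub1
    rw [← hdel1] at hcard
    have h1 := (hdel i).1
    have h2 := (hA i).1
    rw [hcard] at h1
    have h3 : (t i).card ≤ degL ω i := Finset.card_le_card hsub1
    have h4 : ((degL ω i - (t i).card : ℕ) : ℝ) = (degL ω i : ℝ) - (t i).card := by
      exact Nat.cast_sub h3
    rw [degL] at h4 h2
    rw [h4] at h1
    have : r ≤ (1 - ε') * n * p / 2 := hr
    rw [hd]; linarith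
  have hdegR : ∀ j, d ≤ ((t' j).card : ℝ) := by
    intro j
    have hsub1 : t' j ⊆ Finset.univ.filter fun i => ω (i, j) = true :=
      fun i hi => by
        simp only [ht', Finset.mem_filter, Finset.mem_univ, true_and] at hi ⊢
        exact hsub _ hi
    have hdel1 : (Finset.univ.filter fun i => ω (i, j) = true ∧ E' (i, j) = false)
        = (Finset.univ.filter fun i => ω (i, j) = true) \ t' j := by
      ext i
      simp only [ht', Finset.mem_filter, Finset.mem_sdiff, Finset.mem_univ, true_and,
        Bool.not_eq_true]
    have hcard := Finset.card_sdiff_of_subset hsub1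
    rw [← hdel1] at hcard
    have h1 := (hdel j).2
    have h2 := (hA j).2
    rw [hcard] at h1
    have h3 : (t' j).card ≤ degR ω j := Finset.card_le_card hsub1
    have h4 : ((degR ω j - (t' j).card : ℕ) : ℝ) = (degR ω j : ℝ) - (t' j).card := by
      exact Nat.cast_sub h3
    rw [degR] at h4 h2
    rw [h4] at h1
    rw [hd]; linarith
  -- Hall's condition
  have hall : ∀ S : Finset (Fin n), S.card ≤ (S.biUnion t).card := by
    by_contra hcon
    push_neg at hcon
    have hV : (Finset.univ.powerset.filter
        (fun S : Finset (Fin n) => (S.biUnion t).card < S.card)).Nonempty := by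
      obtain ⟨S₀, hS₀⟩ := hcon
      exact ⟨S₀, Finset.mem_filter.2 ⟨Finset.mem_powerset.2 (Finset.subset_univ _), hS₀⟩⟩
    obtain ⟨S, hSV, hmin⟩ := Finset.exists_min_image _ Finset.card hV
    have hS : (S.biUnion t).card < S.card := (Finset.mem_filter.1 hSV).2
    set Y := S.biUnion t with hY
    -- the E'-edge count from S into Y is at least |S| * d
    have hcount : ∀ (SS YY : Finset (Fin n)), (∀ i ∈ SS, t i ⊆ YY) →
        (SS.card : ℝ) * d ≤ (cnt (SS ×ˢ YY) E' : ℝ) := by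
      intro SS YY hsub2
      rw [cnt_prod_left]
      have : ∀ i ∈ SS, (YY.filter fun j => E' (i, j) = true).card = (t i).card := by
        intro i hi
        congr 1
        exact filter_eq_of_subset YY _ (hsub2 i hi)
      push_cast
      calc (SS.card : ℝ) * d = ∑ _i ∈ SS, d := by rw [Finset.sum_const]; ring
        _ ≤ ∑ i ∈ SS, ((YY.filter fun j => E' (i, j) = true).card : ℝ) := by
            refine Finset.sum_le_sum fun i hi => ?_
            rw [this i hi]; exact hdegL i
    have hcount' : ∀ (SS YY : Finset (Fin n)), (∀ j ∈ YY, t' j ⊆ SS) →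
        (YY.card : ℝ) * d ≤ (cnt (SS ×ˢ YY) E' : ℝ) := by
      intro SS YY hsub2
      rw [cnt_prod_right]
      have : ∀ j ∈ YY, (SS.filter fun i => E' (i, j) = true).card = (t' j).card := by
        intro j hj
        congr 1
        exact filter_eq_of_subset SS _ (hsub2 j hj)
      push_cast
      calc (YY.card : ℝ) * d = ∑ _j ∈ YY, d := by rw [Finset.sum_const]; ring
        _ ≤ ∑ j ∈ YY, ((SS.filter fun i => E' (i, j) = true).card : ℝ) := by
            refine Finset.sum_le_sum fun j hj => ?_
            rw [this j hj]; exact hdegR j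
    by_cases hsize : 2 * S.card ≤ n + 1
    · -- small violator
      have h1 := hB S Y hsize hS
      have h2 := hcount S Y (fun i hi => Finset.subset_biUnion_of_mem t hi)
      have h3 := cnt_mono ω E' (S ×ˢ Y) hsub
      have h4 : ((cnt (S ×ˢ Y) E' : ℕ) : ℝ) ≤ (cnt (S ×ˢ Y) ω : ℝ) := by exact_mod_cast h3
      linarith
    · -- large violator: pass to the complement on the right side
      push_neg at hsize
      have hScard_n : S.card ≤ n := by
        simpa using Finset.card_le_card (Finset.subset_univ S)
      have hSne : 1 ≤ S.card := Finset.card_pos.2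
        (Finset.card_pos.1 (lt_of_le_of_lt (Nat.zero_le _) hS))
      -- minimality forces Y to be large
      have hY1 : S.card - 1 ≤ Y.card := by
        by_contra hlt
        push_neg at hlt
        obtain ⟨i₀, hi₀⟩ := Finset.card_pos.1 hSne
        have hcerase : (S.erase i₀).card = S.card - 1 := Finset.card_erase_of_mem hi₀
        have hsub2 : (S.erase i₀).biUnion t ⊆ Y :=
          Finset.biUnion_subset_biUnion_of_subset_left t (Finset.erase_subset i₀ S)
        have hviol : ((S.erase i₀).biUnion t).card < (S.erase i₀).card := by
          have := Finset.card_le_card hsub2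
          omega
        have := hmin (S.erase i₀) (Finset.mem_filter.2
          ⟨Finset.mem_powerset.2 (Finset.subset_univ _), hviol⟩)
        omega
      have hYn : Y.card ≤ n := by simpa using Finset.card_le_card (Finset.subset_univ Y)
      set T : Finset (Fin n) := Finset.univ \ Y with hT
      have hTcard : T.card = n - Y.card := by
        rw [hT, Finset.card_sdiff_of_subset (Finset.subset_univ Y)]
        simp
      have hTsize : 2 * T.card ≤ n + 1 := by omega
      set X₀ : Finset (Fin n) := T.biUnion t' with hX₀
      have hX₀S : ∀ i ∈ X₀, i ∉ S := by
        intro i hi hiS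
        obtain ⟨j, hjT, hij⟩ := Finset.mem_biUnion.1 hi
        simp only [ht', Finset.mem_filter, Finset.mem_univ, true_and] at hij
        have hjY : j ∈ Y := Finset.mem_biUnion.2 ⟨i, hiS, by
          simp only [ht, Finset.mem_filter, Finset.mem_univ, true_and]; exact hij⟩
        rw [hT] at hjT
        exact (Finset.mem_sdiff.1 hjT).2 hjY
      have hX₀card : X₀.card ≤ n - S.card := by
        have hsub3 : X₀ ⊆ Finset.univ \ S := fun i hi =>
          Finset.mem_sdiff.2 ⟨Finset.mem_univ i, hX₀S i hi⟩
        have := Finset.card_le_card hsub3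
        rw [Finset.card_sdiff_of_subset (Finset.subset_univ S)] at this
        simpa using this
      have hX₀T : X₀.card < T.card := by omega
      have h1 := hB' X₀ T hTsize hX₀T
      have h2 := hcount' X₀ T (fun j hj => Finset.subset_biUnion_of_mem t' hj)
      have h3 := cnt_mono ω E' (X₀ ×ˢ T) hsub
      have h4 : ((cnt (X₀ ×ˢ T) E' : ℕ) : ℝ) ≤ (cnt (X₀ ×ˢ T) ω : ℝ) := by exact_mod_cast h3
      linarith
  obtain ⟨f, hfinj, hf⟩ := (Finset.all_card_le_biUnion_card_iff_exists_injective t).1 hall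
  have hbij : Function.Bijective f := Finite.injective_iff_bijective.1 hfinj
  refine ⟨Equiv.ofBijective f hbij, fun i => ?_⟩
  have := hf i
  simp only [ht, Finset.mem_filter, Finset.mem_univ, true_and] at this
  exact this


lemma degL_eq_cnt (ω : (Fin n × Fin n) → Bool) (v : Fin n) :
    degL ω v = cnt ({v} ×ˢ Finset.univ) ω := by
  classical
  rw [cnt_prod_left, Finset.sum_singleton, degL]

lemma degR_eq_cnt (ω : (Fin n × Fin n) → Bool) (v : Fin n) :
    degR ω v = cnt (Finset.univ ×ˢ {v}) ω := by
  classical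
  rw [cnt_prod_right, Finset.sum_singleton, degR]

lemma prob_degL_low (hp0 : 0 ≤ p) (hp1 : p ≤ 1) {u : ℝ} (hu : 0 < u) (hu1 : u ≤ 1)
    (v : Fin n) :
    bipartiteRandomGraph n p {ω | (degL ω v : ℝ) < (1-u) * n * p}
      ≤ ENNReal.ofReal (Real.exp (-((1 - u + u^2 - Real.exp (-u)) * ((n:ℝ) * p)))) := by
  have hnp : (0:ℝ) ≤ (n:ℝ) * p := by positivity
  have hsub : {ω : (Fin n × Fin n) → Bool | (degL ω v : ℝ) < (1-u) * n * p}
      ⊆ {ω | (cnt ({v} ×ˢ Finset.univ) ω : ℝ) ≤ (1-u) * n * p} := by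
    intro ω hω
    rw [Set.mem_setOf_eq, ← degL_eq_cnt]
    exact le_of_lt hω
  have hcard : ({v} ×ˢ (Finset.univ : Finset (Fin n))).card = n := by
    rw [Finset.card_product]; simp
  have h := lower_tail hp0 hp1 ({v} ×ˢ Finset.univ) u ((1-u) * n * p) (le_of_lt hu)
    (by nlinarith)
  rw [hcard] at h
  refine (measure_mono hsub).trans (h.trans (ENNReal.ofReal_le_ofReal ?_))
  rw [Real.exp_le_exp]
  nlinarith [Real.exp_nonneg (-u)]

lemma prob_degR_low (hp0 : 0 ≤ p) (hp1 : p ≤ 1) {u : ℝ} (hu : 0 < u) (hu1 : u ≤ 1)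
    (v : Fin n) :
    bipartiteRandomGraph n p {ω | (degR ω v : ℝ) < (1-u) * n * p}
      ≤ ENNReal.ofReal (Real.exp (-((1 - u + u^2 - Real.exp (-u)) * ((n:ℝ) * p)))) := by
  have hnp : (0:ℝ) ≤ (n:ℝ) * p := by positivity
  have hsub : {ω : (Fin n × Fin n) → Bool | (degR ω v : ℝ) < (1-u) * n * p}
      ⊆ {ω | (cnt (Finset.univ ×ˢ {v}) ω : ℝ) ≤ (1-u) * n * p} := by
    intro ω hω
    rw [Set.mem_setOf_eq, ← degR_eq_cnt]
    exact le_of_lt hω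
  have hcard : ((Finset.univ : Finset (Fin n)) ×ˢ {v}).card = n := by
    rw [Finset.card_product]; simp
  have h := lower_tail hp0 hp1 (Finset.univ ×ˢ {v}) u ((1-u) * n * p) (le_of_lt hu)
    (by nlinarith)
  rw [hcard] at h
  refine (measure_mono hsub).trans (h.trans (ENNReal.ofReal_le_ofReal ?_))
  rw [Real.exp_le_exp]
  nlinarith [Real.exp_nonneg (-u)]

lemma prob_pair (hp0 : 0 ≤ p) (hp1 : p ≤ 1) {u₂ : ℝ} (hu : 0 < u₂) (hu1 : u₂ ≤ 1)
    (X Y : Finset (Fin n)) (h2X : 2 * X.card ≤ n + 1) (hYX : Y.card < X.card) :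
    bipartiteRandomGraph n p
        {ω | (X.card : ℝ) * ((1/2 + u₂/2) * n * p) ≤ (cnt (X ×ˢ Y) ω : ℝ)}
      ≤ ENNReal.ofReal (Real.exp (-(X.card : ℝ) *
          (((1+u₂) * Real.log (1+u₂) - u₂) * ((n:ℝ) * p / 2)))) := by
  have hnp : (0:ℝ) ≤ (n:ℝ) * p := by positivity
  have hL : (0:ℝ) ≤ Real.log (1+u₂) := Real.log_nonneg (by linarith)
  have h := upper_tail hp0 hp1 (X ×ˢ Y) (Real.log (1+u₂))
    ((X.card : ℝ) * ((1/2 + u₂/2) * n * p)) hL (by positivity)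
  rw [Finset.card_product] at h
  refine h.trans (ENNReal.ofReal_le_ofReal ?_)
  rw [Real.exp_le_exp, Real.exp_log (by linarith)]
  -- key numeric inequality
  have hYn : (2:ℝ) * Y.card ≤ (n:ℝ) - 1 := by
    have : 2 * Y.card + 2 ≤ n + 1 := by omega
    have := (Nat.cast_le (α := ℝ)).2 this
    push_cast at this ⊢
    linarith
  have hYp : (Y.card : ℝ) * p ≤ (n:ℝ) * p / 2 := by nlinarith
  have hXc : (0:ℝ) ≤ (X.card : ℝ) := Nat.cast_nonneg _
  push_cast
  nlinarith [mul_le_mul_of_nonneg_left hYp hXc,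
    mul_nonneg (mul_nonneg hXc (by linarith : (0:ℝ) ≤ (n:ℝ)*p/2)) hL]


lemma sum_powerset_pow (B : ℝ≥0∞) :
    ∑ X ∈ (Finset.univ : Finset (Fin n)).powerset, B ^ X.card = (B + 1) ^ n := by
  classical
  have h := Finset.prod_add (fun _ : Fin n => B) (fun _ => 1) Finset.univ
  simp only [Finset.prod_const, one_pow, mul_one, Finset.card_univ, Fintype.card_fin] at h
  exact h.symm

lemma sum_powerset_le (b : ℝ) (hb : 0 ≤ b) (hbn : (n:ℝ) * b ≤ 1) :
    ∑ X ∈ (Finset.univ : Finset (Fin n)).powerset, (ENNReal.ofReal b) ^ X.card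
      ≤ ENNReal.ofReal (Real.exp 1) := by
  rw [sum_powerset_pow]
  have h1 : (ENNReal.ofReal b + 1) ^ n = ENNReal.ofReal ((b + 1) ^ n) := by
    rw [← ENNReal.ofReal_one, ← ENNReal.ofReal_add hb (by norm_num),
      ← ENNReal.ofReal_pow (by linarith)]
  rw [h1]
  refine ENNReal.ofReal_le_ofReal ?_
  calc (b + 1) ^ n ≤ (Real.exp b) ^ n :=
        pow_le_pow_left₀ (by linarith) (Real.add_one_le_exp b) n
    _ = Real.exp ((n:ℝ) * b) := by rw [← Real.exp_nat_mul]
    _ ≤ Real.exp 1 := Real.exp_le_exp.2 hbn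

lemma union_pairs_bound (hlog : 1 ≤ Real.log n) (hn1 : 1 ≤ (n:ℝ))
    (P : Finset (Finset (Fin n) × Finset (Fin n)))
    (hP : P ⊆ Finset.univ.powerset ×ˢ Finset.univ.powerset)
    (ev : Finset (Fin n) × Finset (Fin n) → Set ((Fin n × Fin n) → Bool))
    (hev : ∀ q ∈ P, bipartiteRandomGraph n p (ev q) ≤
      ENNReal.ofReal (Real.exp (-(((q.1.card + q.2.card + 1 : ℕ) : ℝ) *
        ((1 + 5*Real.log n)/2))))) :
    bipartiteRandomGraph n p (⋃ q ∈ P, ev q) ≤ ENNReal.ofReal (3/(n:ℝ)^2) := by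
  classical
  set β : ℝ := (1 + 5*Real.log n)/2 with hβ
  set B : ℝ≥0∞ := ENNReal.ofReal (Real.exp (-β)) with hB
  have hβ1 : 1 + 2 * Real.log n ≤ β := by rw [hβ]; linarith
  have hexpβ : Real.exp (-β) ≤ 1/(Real.exp 1 * (n:ℝ)^2) := by
    have h2 : Real.exp (-(1 + 2*Real.log n)) = 1/(Real.exp 1 * (n:ℝ)^2) := by
      rw [Real.exp_neg, one_div]
      congr 1
      rw [Real.exp_add]
      congr 1
      rw [show (2:ℝ) * Real.log n = Real.log n + Real.log n by ring, Real.exp_add,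
        Real.exp_log (by linarith), sq]
    rw [← h2]
    exact Real.exp_le_exp.2 (by linarith)
  have hterm : ∀ q ∈ P, bipartiteRandomGraph n p (ev q) ≤ B ^ q.1.card * B ^ q.2.card * B := by
    intro q hq
    refine (hev q hq).trans (le_of_eq ?_)
    rw [hB, ← ENNReal.ofReal_pow (Real.exp_nonneg _), ← ENNReal.ofReal_pow (Real.exp_nonneg _),
      ← ENNReal.ofReal_mul (by positivity), ← ENNReal.ofReal_mul (by positivity),
      ← Real.exp_nat_mul, ← Real.exp_nat_mul, ← Real.exp_add, ← Real.exp_add]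
    congr 1
    push_cast
    ring
  have hBb : B = ENNReal.ofReal (Real.exp (-β)) := rfl
  have hsum : ∀ T : Finset (Finset (Fin n)),
      T = Finset.univ.powerset →
      ∑ X ∈ T, B ^ X.card ≤ ENNReal.ofReal (Real.exp 1) := by
    intro T hT
    subst hT
    refine sum_powerset_le (Real.exp (-β)) (Real.exp_nonneg _) ?_
    have hn2 : (1:ℝ) ≤ (n:ℝ)^2 := by nlinarith
    have he1 : (1:ℝ) ≤ Real.exp 1 := by
      have := Real.add_one_le_exp (1:ℝ); linarith
    calc (n:ℝ) * Real.exp (-β) ≤ (n:ℝ) * (1/(Real.exp 1 * (n:ℝ)^2)) := by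
          exact mul_le_mul_of_nonneg_left hexpβ (by linarith)
      _ ≤ 1 := by
          have hpos : (0:ℝ) < Real.exp 1 * (n:ℝ)^2 := by positivity
          rw [mul_one_div, div_le_one hpos]
          nlinarith
  calc bipartiteRandomGraph n p (⋃ q ∈ P, ev q)
      ≤ ∑ q ∈ P, bipartiteRandomGraph n p (ev q) := measure_biUnion_finset_le P ev
    _ ≤ ∑ q ∈ P, B ^ q.1.card * B ^ q.2.card * B := Finset.sum_le_sum hterm
    _ ≤ ∑ q ∈ Finset.univ.powerset ×ˢ Finset.univ.powerset,
          B ^ q.1.card * B ^ q.2.card * B :=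
        Finset.sum_le_sum_of_subset hP
    _ = (∑ X ∈ Finset.univ.powerset, B ^ X.card) *
          (∑ Y ∈ Finset.univ.powerset, B ^ Y.card) * B := by
        rw [Finset.sum_mul_sum, Finset.sum_mul, Finset.sum_product]
        refine Finset.sum_congr rfl fun X _ => ?_
        rw [Finset.sum_mul]
    _ ≤ ENNReal.ofReal (Real.exp 1) * ENNReal.ofReal (Real.exp 1) * B :=
        mul_le_mul' (mul_le_mul' (hsum _ rfl) (hsum _ rfl)) le_rfl
    _ ≤ ENNReal.ofReal (3/(n:ℝ)^2) := by
        rw [hBb, ← ENNReal.ofReal_mul (Real.exp_nonneg _),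
          ← ENNReal.ofReal_mul (by positivity)]
        refine ENNReal.ofReal_le_ofReal ?_
        have h3 : Real.exp 1 ≤ 3 := by
          have := Real.exp_one_lt_d9; linarith
        have hn2 : (0:ℝ) < (n:ℝ)^2 := by nlinarith
        calc Real.exp 1 * Real.exp 1 * Real.exp (-β)
            ≤ Real.exp 1 * Real.exp 1 * (1/(Real.exp 1 * (n:ℝ)^2)) := by
              refine mul_le_mul_of_nonneg_left hexpβ (by positivity)
          _ = Real.exp 1 / (n:ℝ)^2 := by
              field_simp
          _ ≤ 3/(n:ℝ)^2 := by gcongr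


lemma prob_pair' (hp0 : 0 ≤ p) (hp1 : p ≤ 1) {u₂ : ℝ} (hu : 0 < u₂) (hu1 : u₂ ≤ 1)
    (X Y : Finset (Fin n)) (h2Y : 2 * Y.card ≤ n + 1) (hXY : X.card < Y.card) :
    bipartiteRandomGraph n p
        {ω | (Y.card : ℝ) * ((1/2 + u₂/2) * n * p) ≤ (cnt (X ×ˢ Y) ω : ℝ)}
      ≤ ENNReal.ofReal (Real.exp (-(Y.card : ℝ) *
          (((1+u₂) * Real.log (1+u₂) - u₂) * ((n:ℝ) * p / 2)))) := by
  have hnp : (0:ℝ) ≤ (n:ℝ) * p := by positivity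
  have hL : (0:ℝ) ≤ Real.log (1+u₂) := Real.log_nonneg (by linarith)
  have h := upper_tail hp0 hp1 (X ×ˢ Y) (Real.log (1+u₂))
    ((Y.card : ℝ) * ((1/2 + u₂/2) * n * p)) hL (by positivity)
  rw [Finset.card_product] at h
  refine h.trans (ENNReal.ofReal_le_ofReal ?_)
  rw [Real.exp_le_exp, Real.exp_log (by linarith)]
  have hXn : (2:ℝ) * X.card ≤ (n:ℝ) - 1 := by
    have : 2 * X.card + 2 ≤ n + 1 := by omega
    have := (Nat.cast_le (α := ℝ)).2 this
    push_cast at this ⊢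
    linarith
  have hXp : (X.card : ℝ) * p ≤ (n:ℝ) * p / 2 := by nlinarith
  have hYc : (0:ℝ) ≤ (Y.card : ℝ) := Nat.cast_nonneg _
  push_cast
  nlinarith [mul_le_mul_of_nonneg_left hXp hYc,
    mul_nonneg (mul_nonneg hYc (by linarith : (0:ℝ) ≤ (n:ℝ)*p/2)) hL]

lemma exp_three_log (hn1 : 1 ≤ (n:ℝ)) : Real.exp (-(3 * Real.log n)) = 1/(n:ℝ)^3 := by
  rw [Real.exp_neg, one_div]
  congr 1
  rw [show (3:ℝ) * Real.log n = Real.log n + Real.log n + Real.log n by ring,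
    Real.exp_add, Real.exp_add, Real.exp_log (by linarith)]
  ring

lemma main_bound (hp0 : 0 ≤ p) (hp1 : p ≤ 1) {ε' r : ℝ} (hε : 0 < ε') (hε1 : ε' ≤ 1/2)
    (hr : r ≤ (1 - ε') * n * p / 2)
    (hlog : 1 ≤ Real.log n) (hn1 : 1 ≤ (n:ℝ))
    (hc1 : 3 * Real.log n ≤ (1 - ε'/4 + (ε'/4)^2 - Real.exp (-(ε'/4))) * ((n:ℝ) * p))
    (hc2 : 1 + 5 * Real.log n ≤ ((1 + ε'/2) * Real.log (1 + ε'/2) - ε'/2) * ((n:ℝ) * p / 2)) :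
    bipartiteRandomGraph n p {ω | ¬ matchingResilient n r ω}
      ≤ ENNReal.ofReal (8/(n:ℝ)^2) := by
  classical
  set u : ℝ := ε'/4 with hu
  set SA : Set ((Fin n × Fin n) → Bool) :=
    ⋃ v ∈ (Finset.univ : Finset (Fin n)),
      ({ω | (degL ω v : ℝ) < (1-u) * n * p} ∪ {ω | (degR ω v : ℝ) < (1-u) * n * p}) with hSA
  set PB : Finset (Finset (Fin n) × Finset (Fin n)) :=
    (Finset.univ.powerset ×ˢ Finset.univ.powerset).filter
      (fun q => 2*q.1.card ≤ n+1 ∧ q.2.card < q.1.card) with hPB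
  set PB' : Finset (Finset (Fin n) × Finset (Fin n)) :=
    (Finset.univ.powerset ×ˢ Finset.univ.powerset).filter
      (fun q => 2*q.2.card ≤ n+1 ∧ q.1.card < q.2.card) with hPB'
  set evB : Finset (Fin n) × Finset (Fin n) → Set ((Fin n × Fin n) → Bool) :=
    fun q => {ω | (q.1.card : ℝ) * ((1/2 + (ε'/2)/2) * n * p) ≤ (cnt (q.1 ×ˢ q.2) ω : ℝ)}
    with hevB
  set evB' : Finset (Fin n) × Finset (Fin n) → Set ((Fin n × Fin n) → Bool) :=
    fun q => {ω | (q.2.card : ℝ) * ((1/2 + (ε'/2)/2) * n * p) ≤ (cnt (q.1 ×ˢ q.2) ω : ℝ)}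
    with hevB'
  have hconst : (1:ℝ)/2 + (ε'/2)/2 = 1/2 + ε'/4 := by ring
  -- the inclusion
  have hsubset : {ω | ¬ matchingResilient n r ω} ⊆ SA ∪ ((⋃ q ∈ PB, evB q) ∪ (⋃ q ∈ PB', evB' q)) := by
    intro ω hω
    by_contra hno
    simp only [Set.mem_union, not_or] at hno
    obtain ⟨hnA, hnB, hnB'⟩ := hno
    refine hω (resilient_of_good hp0 hε hr ω ?_ ?_ ?_)
    · intro v
      constructor
      · by_contra h
        push_neg at h
        exact hnA (Set.mem_iUnion₂.2 ⟨v, Finset.mem_univ v, Or.inl h⟩)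
      · by_contra h
        push_neg at h
        exact hnA (Set.mem_iUnion₂.2 ⟨v, Finset.mem_univ v, Or.inr h⟩)
    · intro X Y h2X hYX
      by_contra h
      push_neg at h
      refine hnB (Set.mem_iUnion₂.2 ⟨(X, Y), ?_, ?_⟩)
      · rw [hPB, Finset.mem_filter]
        exact ⟨Finset.mem_product.2 ⟨Finset.mem_powerset.2 (Finset.subset_univ _),
          Finset.mem_powerset.2 (Finset.subset_univ _)⟩, h2X, hYX⟩
      · rw [hevB]
        rw [Set.mem_setOf_eq, hconst]
        exact h
    · intro X Y h2Y hXY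
      by_contra h
      push_neg at h
      refine hnB' (Set.mem_iUnion₂.2 ⟨(X, Y), ?_, ?_⟩)
      · rw [hPB', Finset.mem_filter]
        exact ⟨Finset.mem_product.2 ⟨Finset.mem_powerset.2 (Finset.subset_univ _),
          Finset.mem_powerset.2 (Finset.subset_univ _)⟩, h2Y, hXY⟩
      · rw [hevB']
        rw [Set.mem_setOf_eq, hconst]
        exact h
  -- probability of SA
  have hA : bipartiteRandomGraph n p SA ≤ ENNReal.ofReal (2/(n:ℝ)^2) := by
    have hu0 : 0 < u := by rw [hu]; linarith
    have hu1 : u ≤ 1 := by rw [hu]; linarith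
    have hterm : ∀ v : Fin n,
        bipartiteRandomGraph n p
          ({ω | (degL ω v : ℝ) < (1-u) * n * p} ∪ {ω | (degR ω v : ℝ) < (1-u) * n * p})
        ≤ ENNReal.ofReal (2/(n:ℝ)^3) := by
      intro v
      have h1 := prob_degL_low hp0 hp1 hu0 hu1 v
      have h2 := prob_degR_low hp0 hp1 hu0 hu1 v
      have hexp : Real.exp (-((1 - u + u^2 - Real.exp (-u)) * ((n:ℝ) * p)))
          ≤ 1/(n:ℝ)^3 := by
        rw [← exp_three_log hn1]
        refine Real.exp_le_exp.2 ?_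
        linarith
      calc bipartiteRandomGraph n p _ ≤ _ + _ := measure_union_le _ _
        _ ≤ ENNReal.ofReal (1/(n:ℝ)^3) + ENNReal.ofReal (1/(n:ℝ)^3) := by
            exact add_le_add (h1.trans (ENNReal.ofReal_le_ofReal hexp))
              (h2.trans (ENNReal.ofReal_le_ofReal hexp))
        _ = ENNReal.ofReal (2/(n:ℝ)^3) := by
            rw [← ENNReal.ofReal_add (by positivity) (by positivity)]
            congr 1
            ring
    calc bipartiteRandomGraph n p SA
        ≤ ∑ v ∈ (Finset.univ : Finset (Fin n)), bipartiteRandomGraph n p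
            ({ω | (degL ω v : ℝ) < (1-u) * n * p} ∪ {ω | (degR ω v : ℝ) < (1-u) * n * p}) :=
          measure_biUnion_finset_le _ _
      _ ≤ ∑ _v ∈ (Finset.univ : Finset (Fin n)), ENNReal.ofReal (2/(n:ℝ)^3) :=
          Finset.sum_le_sum fun v _ => hterm v
      _ = (n : ℝ≥0∞) * ENNReal.ofReal (2/(n:ℝ)^3) := by
          rw [Finset.sum_const, Finset.card_univ, Fintype.card_fin, nsmul_eq_mul]
      _ ≤ ENNReal.ofReal (2/(n:ℝ)^2) := by
          rw [← ENNReal.ofReal_natCast n, ← ENNReal.ofReal_mul (by positivity)]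
          refine ENNReal.ofReal_le_ofReal (le_of_eq ?_)
          field_simp
  -- probabilities of the pair events
  have hu2 : (0:ℝ) < ε'/2 := by linarith
  have hu21 : ε'/2 ≤ 1 := by linarith
  have hβ : ∀ s t : ℕ, t < s →
      Real.exp (-(s:ℝ) * (((1 + ε'/2) * Real.log (1 + ε'/2) - ε'/2) * ((n:ℝ) * p / 2)))
        ≤ Real.exp (-(((s + t + 1 : ℕ) : ℝ) * ((1 + 5*Real.log n)/2))) := by
    intro s t hts
    refine Real.exp_le_exp.2 ?_
    have hst : ((s + t + 1 : ℕ) : ℝ) ≤ 2 * s := by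
      have : s + t + 1 ≤ 2 * s := by omega
      exact_mod_cast this
    have hs0 : (0:ℝ) ≤ (s:ℝ) := Nat.cast_nonneg _
    have hβ0 : (0:ℝ) ≤ (1 + 5*Real.log n)/2 := by linarith
    have h1 : (s:ℝ) * (1 + 5*Real.log n) ≤
        (s:ℝ) * (((1 + ε'/2) * Real.log (1 + ε'/2) - ε'/2) * ((n:ℝ) * p / 2)) :=
      mul_le_mul_of_nonneg_left hc2 hs0
    nlinarith [mul_le_mul_of_nonneg_right hst hβ0]
  have hBbound : bipartiteRandomGraph n p (⋃ q ∈ PB, evB q) ≤ ENNReal.ofReal (3/(n:ℝ)^2) := by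
    refine union_pairs_bound hlog hn1 PB (Finset.filter_subset _ _) evB ?_
    intro q hq
    rw [hPB, Finset.mem_filter] at hq
    obtain ⟨-, h2X, hYX⟩ := hq
    refine (prob_pair hp0 hp1 hu2 hu21 q.1 q.2 h2X hYX).trans ?_
    exact ENNReal.ofReal_le_ofReal (hβ q.1.card q.2.card hYX)
  have hBbound' : bipartiteRandomGraph n p (⋃ q ∈ PB', evB' q) ≤ ENNReal.ofReal (3/(n:ℝ)^2) := by
    refine union_pairs_bound hlog hn1 PB' (Finset.filter_subset _ _) evB' ?_
    intro q hq
    rw [hPB', Finset.mem_filter] at hq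
    obtain ⟨-, h2Y, hXY⟩ := hq
    refine (prob_pair' hp0 hp1 hu2 hu21 q.1 q.2 h2Y hXY).trans ?_
    refine (ENNReal.ofReal_le_ofReal (hβ q.2.card q.1.card hXY)).trans ?_
    refine ENNReal.ofReal_le_ofReal (Real.exp_le_exp.2 (le_of_eq ?_))
    congr 2
    push_cast
    ring
  -- combine
  calc bipartiteRandomGraph n p {ω | ¬ matchingResilient n r ω}
      ≤ bipartiteRandomGraph n p (SA ∪ ((⋃ q ∈ PB, evB q) ∪ (⋃ q ∈ PB', evB' q))) :=
        measure_mono hsubset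
    _ ≤ bipartiteRandomGraph n p SA +
          bipartiteRandomGraph n p ((⋃ q ∈ PB, evB q) ∪ (⋃ q ∈ PB', evB' q)) :=
        measure_union_le _ _
    _ ≤ bipartiteRandomGraph n p SA +
          (bipartiteRandomGraph n p (⋃ q ∈ PB, evB q) +
            bipartiteRandomGraph n p (⋃ q ∈ PB', evB' q)) :=
        add_le_add le_rfl (measure_union_le _ _)
    _ ≤ ENNReal.ofReal (2/(n:ℝ)^2) + (ENNReal.ofReal (3/(n:ℝ)^2) + ENNReal.ofReal (3/(n:ℝ)^2)) :=
        add_le_add hA (add_le_add hBbound hBbound')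
    _ = ENNReal.ofReal (8/(n:ℝ)^2) := by
        rw [← ENNReal.ofReal_add (by positivity) (by positivity),
          ← ENNReal.ofReal_add (by positivity) (by positivity)]
        congr 1
        ring


lemma c1_pos {u : ℝ} (hu : 0 < u) (hu1 : u ≤ 1) :
    0 < 1 - u + u^2 - Real.exp (-u) := by
  have h2 : u + 1 ≤ Real.exp u := Real.add_one_le_exp u
  have hpos : (0:ℝ) < 1 + u := by linarith
  have h3 : Real.exp (-u) ≤ (1+u)⁻¹ := by
    rw [Real.exp_neg]
    exact inv_anti₀ hpos (by linarith)
  have h5 : (1:ℝ) < (1-u+u^2)*(1+u) := by nlinarith [mul_pos (mul_pos hu hu) hu]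
  have h4 : 1/(1+u) < 1-u+u^2 := (div_lt_iff₀ hpos).2 h5
  rw [one_div] at h4
  linarith

lemma c2_pos {u₂ : ℝ} (hu : 0 < u₂) :
    0 < (1 + u₂) * Real.log (1 + u₂) - u₂ := by
  have hpos : (0:ℝ) < 1 + u₂ := by linarith
  have hx : (0:ℝ) < (1+u₂)⁻¹ := by positivity
  have hne : (1+u₂)⁻¹ ≠ 1 := by
    intro h
    have : (1+u₂) = 1 := by
      field_simp at h
      linarith
    linarith
  have hlog := Real.log_lt_sub_one_of_pos hx hne
  rw [Real.log_inv] at hlog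
  have h1 : u₂ / (1+u₂) < Real.log (1+u₂) := by
    have h2 : (1+u₂)⁻¹ - 1 = -(u₂/(1+u₂)) := by
      field_simp
      ring
    rw [h2] at hlog
    linarith
  have h3 : u₂ < Real.log (1+u₂) * (1+u₂) := (div_lt_iff₀ hpos).1 h1
  nlinarith

end BMR

/-- Local resilience of `B(n,p)` with respect to perfect matchings: for `ε > 0` and
`np/log n → ∞`, with probability `1 − o(1/n)` every subgraph of `B(n,p)` obtained by
deleting at most `(1−ε)np/2` edges at each vertex contains a perfect matching. -/
theorem bipartite_matching_resilience (ε : ℝ) (hε : 0 < ε) (p : ℕ → ℝ)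
    (hp01 : ∀ n, 0 ≤ p n ∧ p n ≤ 1)
    (hp : Filter.Tendsto (fun (n : ℕ) => (n : ℝ) * p n / Real.log n)
      Filter.atTop Filter.atTop) :
    Filter.Tendsto
      (fun (n : ℕ) => (n : ℝ) *
        (bipartiteRandomGraph n (p n)
          {ω | ¬ matchingResilient n ((1 - ε) * n * p n / 2) ω}).toReal)
      Filter.atTop (nhds 0) := by
  classical
  set ε' : ℝ := min ε (1/2) with hε'def
  have hε'pos : 0 < ε' := lt_min hε (by norm_num)
  have hε'a : ε' ≤ ε := min_le_left _ _
  have hε'b : ε' ≤ 1/2 := min_le_right _ _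
  set c₁ : ℝ := 1 - ε'/4 + (ε'/4)^2 - Real.exp (-(ε'/4)) with hc₁def
  set c₂ : ℝ := (1 + ε'/2) * Real.log (1 + ε'/2) - ε'/2 with hc₂def
  have hc₁pos : 0 < c₁ := by rw [hc₁def]; exact BMR.c1_pos (by linarith) (by linarith)
  have hc₂pos : 0 < c₂ := by rw [hc₂def]; exact BMR.c2_pos (by linarith)
  clear_value ε' c₁ c₂
  have hM : ∀ᶠ (k:ℕ) in Filter.atTop,
      max (3/c₁) (12/c₂) ≤ (k:ℝ) * p k / Real.log k := hp.eventually_ge_atTop _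
  have hn3 : ∀ᶠ (k:ℕ) in Filter.atTop, 3 ≤ k := Filter.eventually_ge_atTop 3
  refine squeeze_zero' ?_ ?_ (tendsto_const_div_atTop_nhds_zero_nat 8)
  · filter_upwards with k
    positivity
  · filter_upwards [hM, hn3] with k h1 h2
    have hk1 : (1:ℝ) ≤ (k:ℝ) := by exact_mod_cast (by omega : 1 ≤ k)
    have hk3 : (3:ℝ) ≤ (k:ℝ) := by exact_mod_cast h2
    have hexp13 : Real.exp 1 ≤ 3 := by
      have := Real.exp_one_lt_d9
      linarith
    have hlogk : 1 ≤ Real.log k := by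
      rw [Real.le_log_iff_exp_le (by linarith)]
      linarith
    have hlogpos : (0:ℝ) < Real.log k := by linarith
    have hnp' : max (3/c₁) (12/c₂) * Real.log k ≤ (k:ℝ) * p k := by
      have := (le_div_iff₀ hlogpos).1 h1
      linarith
    have hnp0 : (0:ℝ) ≤ (k:ℝ) * p k := mul_nonneg (Nat.cast_nonneg k) (hp01 k).1
    have hc1' : 3 * Real.log k ≤ c₁ * ((k:ℝ) * p k) := by
      have ha : 3/c₁ * Real.log k ≤ (k:ℝ) * p k :=
        le_trans (mul_le_mul_of_nonneg_right (le_max_left _ _) hlogpos.le) hnp'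
      calc 3 * Real.log k = c₁ * (3/c₁ * Real.log k) := by field_simp
        _ ≤ c₁ * ((k:ℝ) * p k) := mul_le_mul_of_nonneg_left ha hc₁pos.le
    have hc2' : 1 + 5 * Real.log k ≤ c₂ * ((k:ℝ) * p k / 2) := by
      have ha : 12/c₂ * Real.log k ≤ (k:ℝ) * p k :=
        le_trans (mul_le_mul_of_nonneg_right (le_max_right _ _) hlogpos.le) hnp'
      have hb : 12 * Real.log k ≤ c₂ * ((k:ℝ) * p k) := by
        calc 12 * Real.log k = c₂ * (12/c₂ * Real.log k) := by field_simp
          _ ≤ c₂ * ((k:ℝ) * p k) := mul_le_mul_of_nonneg_left ha hc₂pos.le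
      have hc : 1 + 5 * Real.log k ≤ 6 * Real.log k := by linarith
      rw [show c₂ * ((k:ℝ) * p k / 2) = c₂ * ((k:ℝ) * p k) / 2 from by ring]
      linarith
    have hr : (1 - ε) * (k:ℝ) * p k / 2 ≤ (1 - ε') * (k:ℝ) * p k / 2 := by
      nlinarith
    rw [hc₁def] at hc1'
    rw [hc₂def] at hc2'
    have hbound := BMR.main_bound (hp01 k).1 (hp01 k).2 hε'pos hε'b hr hlogk hk1 hc1' hc2'
    have h8 : (0:ℝ) ≤ 8/(k:ℝ)^2 := by positivity
    have htr := ENNReal.toReal_mono ENNReal.ofReal_ne_top hbound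
    rw [ENNReal.toReal_ofReal h8] at htr
    calc (k:ℝ) * (bipartiteRandomGraph k (p k)
          {ω | ¬ matchingResilient k ((1 - ε) * k * p k / 2) ω}).toReal
        ≤ (k:ℝ) * (8/(k:ℝ)^2) := mul_le_mul_of_nonneg_left htr (Nat.cast_nonneg k)
      _ = 8/(k:ℝ) := by
          field_simp
end

section
/- Bin-packing lemma for the averaging partition: let A be a finite multiset of positive integers each at most K with total sum n, and let b be a positive integer. Then A can be partitioned into b parts such that each part has sum within 12K of n/b. -/
lemma list_bin_packing (K : ℕ) (l : List ℕ) (hl : ∀ x ∈ l, 0 < x ∧ x ≤ K)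
    (b : ℕ) (hb : 0 < b) :
    ∃ P : Fin b → Multiset ℕ, (∑ i, P i) = (l : Multiset ℕ) ∧
      ∀ i, |((P i).sum : ℝ) - (l.sum : ℝ) / b| ≤ 12 * K := by
  classical
  set n := l.sum with hn
  set p : ℕ → ℕ → Prop := fun i j => l.length ≤ j ∨ i * n ≤ (l.take j).sum * b with hp
  have hex : ∀ i, ∃ j, p i j := fun i => ⟨l.length, Or.inl le_rfl⟩
  set f : ℕ → ℕ := fun i => Nat.find (hex i) with hf
  have hfle : ∀ i, f i ≤ l.length := fun i => Nat.find_min' (hex i) (Or.inl le_rfl)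
  have hspec : ∀ i, p i (f i) := fun i => Nat.find_spec (hex i)
  have hmono : ∀ i j, i ≤ j → f i ≤ f j := by
    intro i j hij
    apply Nat.find_min' (hex i)
    rcases hspec j with h | h
    · exact Or.inl h
    · exact Or.inr (le_trans (Nat.mul_le_mul_right n hij) h)
  have htake : ∀ i j, i ≤ j → l.take (f j) = l.take (f i) ++ (l.drop (f i)).take (f j - f i) := by
    intro i j hij
    rw [← List.take_add]
    congr 1
    have := hmono i j hij
    omega
  have hf0 : f 0 = 0 := Nat.le_zero.mp (Nat.find_min' (hex 0) (Or.inr (by simp)))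
  -- proper prefixes have sum < n
  have hprefix : ∀ j, j < l.length → (l.take j).sum < n := by
    intro j hj
    have hsplit : n = (l.take j).sum + (l.drop j).sum := by
      rw [hn]; rw [← List.sum_take_add_sum_drop l j]
    have hne : l.drop j ≠ [] := by
      intro h
      have : (l.drop j).length = l.length - j := List.length_drop
      rw [h] at this
      simp at this
      omega
    obtain ⟨x, t, hxt⟩ := List.exists_cons_of_ne_nil hne
    have hxl : x ∈ l := by
      have : x ∈ l.drop j := by rw [hxt]; exact List.mem_cons_self
      exact List.mem_of_mem_drop this
    have hxp := (hl x hxl).1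
    have : 0 < (l.drop j).sum := by
      rw [hxt, List.sum_cons]
      omega
    omega
  have hfb : f b = l.length := by
    refine le_antisymm (hfle b) ?_
    by_contra h
    push_neg at h
    rcases hspec b with hc | hc
    · omega
    · have h1 := hprefix (f b) h
      have : b * n ≤ (l.take (f b)).sum * b := hc
      nlinarith
  -- lower bound on prefix sums
  have hlow : ∀ i, i ≤ b → i * n ≤ (l.take (f i)).sum * b := by
    intro i hib
    rcases hspec i with hc | hc
    · have : f i = l.length := le_antisymm (hfle i) hc
      rw [this, List.take_length]
      calc i * n ≤ b * n := Nat.mul_le_mul_right n hib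
        _ = n * b := Nat.mul_comm b n
    · exact hc
  -- upper bound on prefix sums
  have hhigh : ∀ i, (l.take (f i)).sum * b ≤ i * n + K * b := by
    intro i
    rcases Nat.eq_zero_or_pos (f i) with h0 | h0
    · rw [h0]
      simp
    · have hmin := Nat.find_min (hex i) (show f i - 1 < f i by omega)
      have hmin' : ¬(l.length ≤ f i - 1 ∨ i * n ≤ (l.take (f i - 1)).sum * b) := hmin
      push_neg at hmin'
      obtain ⟨hlen, hsum⟩ := hmin'
      have hij : f i = (f i - 1) + 1 := by omega
      set j := f i - 1 with hjdef
      have hjlt : j < l.length := hlen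
      have hstep : (l.take (j + 1)).sum = (l.take j).sum + l.get ⟨j, hjlt⟩ := by
        rw [List.take_succ, List.sum_append, List.getElem?_eq_getElem hjlt]
        simp
      have hxK : l.get ⟨j, hjlt⟩ ≤ K := (hl _ (List.get_mem l ⟨j, hjlt⟩)).2
      rw [hij, hstep]
      have hKb : l.get ⟨j, hjlt⟩ * b ≤ K * b := Nat.mul_le_mul_right b hxK
      nlinarith [Nat.add_mul (l.take j).sum (l.get ⟨j, hjlt⟩) b]
  -- the segments
  set seg : ℕ → List ℕ := fun i => (l.drop (f i)).take (f (i + 1) - f i) with hseg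
  have hsegsum : ∀ i, (l.take (f i)).sum + (seg i).sum = (l.take (f (i + 1))).sum := by
    intro i
    rw [htake i (i + 1) (Nat.le_succ i), List.sum_append]
  -- telescoping: partial unions
  have htel : ∀ m, (∑ i ∈ Finset.range m, ((seg i : Multiset ℕ))) = (l.take (f m) : Multiset ℕ) := by
    intro m
    induction m with
    | zero => simp [hf0]
    | succ m ih =>
      rw [Finset.sum_range_succ, ih, htake m (m + 1) (Nat.le_succ m)]
      simp
      exact List.Perm.refl _
  refine ⟨fun i => (seg i.val : Multiset ℕ), ?_, ?_⟩
  · rw [Fin.sum_univ_eq_sum_range (fun i => ((seg i : Multiset ℕ)))]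
    rw [htel b, hfb, List.take_length]
  · intro i
    have hik : i.val < b := i.isLt
    have h1 := hlow i.val (le_of_lt hik)
    have h2 := hhigh i.val
    have h3 := hlow (i.val + 1) hik
    have h4 := hhigh (i.val + 1)
    have h5 := hsegsum i.val
    have hbR : (0:ℝ) < b := by exact_mod_cast hb
    have hsum : ((seg i.val : Multiset ℕ)).sum = (seg i.val).sum := by
      simp
    rw [hsum]
    have key : |((seg i.val).sum : ℝ) * b - n| ≤ K * b := by
      rw [abs_le]
      constructor
      · have c3 : ((i.val : ℝ) + 1) * n ≤ (l.take (f (i.val + 1))).sum * b := by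
          exact_mod_cast h3
        have c2 : ((l.take (f i.val)).sum : ℝ) * b ≤ i.val * n + K * b := by exact_mod_cast h2
        have c5 : ((l.take (f i.val)).sum : ℝ) + (seg i.val).sum = (l.take (f (i.val + 1))).sum := by
          exact_mod_cast h5
        nlinarith
      · have c1 : ((i.val : ℝ)) * n ≤ (l.take (f i.val)).sum * b := by exact_mod_cast h1
        have c4 : ((l.take (f (i.val + 1))).sum : ℝ) * b ≤ ((i.val : ℝ) + 1) * n + K * b := by
          exact_mod_cast h4
        have c5 : ((l.take (f i.val)).sum : ℝ) + (seg i.val).sum = (l.take (f (i.val + 1))).sum := by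
          exact_mod_cast h5
        nlinarith
    have heq : ((seg i.val).sum : ℝ) - n / b = ((seg i.val).sum * b - n) / b := by
      field_simp
    rw [heq, abs_div, abs_of_pos hbR, div_le_iff₀ hbR]
    have hK0 : (0:ℝ) ≤ K := Nat.cast_nonneg K
    nlinarith
  
/-- Bin-packing via the averaging partition: a finite multiset of positive integers,
each at most `K`, with total sum `n`, can be partitioned into `b` parts so that each
part's sum is within `12K` of `n/b`. -/
theorem averaging_bin_packing (K : ℕ) (A : Multiset ℕ)
    (hA : ∀ x ∈ A, 0 < x ∧ x ≤ K) (b : ℕ) (hb : 0 < b) :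
    ∃ P : Fin b → Multiset ℕ, (∑ i, P i) = A ∧
      ∀ i, |((P i).sum : ℝ) - (A.sum : ℝ) / b| ≤ 12 * K := by
  obtain ⟨l, hlA⟩ : ∃ l : List ℕ, (l : Multiset ℕ) = A := ⟨A.toList, A.coe_toList⟩
  have hsum : (l.sum : ℕ) = A.sum := by rw [← hlA]; simp
  obtain ⟨P, h1, h2⟩ := list_bin_packing K l (fun x hx => hA x (by rw [← hlA]; exact hx)) b hb
  exact ⟨P, by rw [h1, hlA], fun i => by rw [← hsum]; exact h2 i⟩
end
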